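/- Let G be an edge-colored complete graph on n vertices with Δ^mon(G) ≤ n − 2k. Then either G contains k pairwise vertex-disjoint properly edge-colored cycles of length at most 4, or every vertex of G whose color degree is at most 3 is contained in a properly edge-colored cycle of length 3 or 4. -/

import Mathlib

/-- Number of edges of color `a` incident with `v` (monochromatic degree). -/
noncomputable def monDeg {V : Type*} (col : V → V → ℕ) (v : V) (a : ℕ) : ℕ :=
  {u | u ≠ v ∧ col v u = a}.ncard

/-- Color degree of a vertex: number of distinct colors on incident edges. -/
noncomputable def colorDeg {V : Type*} (col : V → V → ℕ) (v : V) : ℕ :=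
  (col v '' {u | u ≠ v}).ncard

/-- Maximum monochromatic degree Δ^mon. -/
noncomputable def maxMonDeg {V : Type*} (col : V → V → ℕ) : ℕ :=
  sSup {d | ∃ v a, d = monDeg col v a}

/-- Number of colors appearing on edges. -/
noncomputable def numColors {V : Type*} (col : V → V → ℕ) : ℕ :=
  {a | ∃ u v : V, u ≠ v ∧ col u v = a}.ncard

/-- A properly edge-colored (PC) cycle of length `m`, given by an injective
map `c : ZMod m → V`; adjacent edges get distinct colors. -/
def IsPCCycle {V : Type*} (col : V → V → ℕ) (m : ℕ) (c : ZMod m → V) : Prop :=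
  3 ≤ m ∧ Function.Injective c ∧
    ∀ i : ZMod m, col (c i) (c (i + 1)) ≠ col (c (i + 1)) (c (i + 2))

/-- `k` pairwise vertex-disjoint PC cycles. -/
def HasKDisjointPCCycles {V : Type*} (col : V → V → ℕ) (k : ℕ) : Prop :=
  ∃ (m : Fin k → ℕ) (c : ∀ j, ZMod (m j) → V),
    (∀ j, IsPCCycle col (m j) (c j)) ∧
    ∀ j j', j ≠ j' → Disjoint (Set.range (c j)) (Set.range (c j'))

/-- `k` pairwise vertex-disjoint PC cycles, each of length at most 4. -/
def HasKDisjointShortPCCycles {V : Type*} (col : V → V → ℕ) (k : ℕ) : Prop :=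
  ∃ (m : Fin k → ℕ) (c : ∀ j, ZMod (m j) → V),
    (∀ j, IsPCCycle col (m j) (c j) ∧ m j ≤ 4) ∧
    ∀ j j', j ≠ j' → Disjoint (Set.range (c j)) (Set.range (c j'))

/-- A directed cycle of length `m` in a digraph with arc relation `A`. -/
def IsDicycle {V : Type*} (A : V → V → Prop) (m : ℕ) (c : ZMod m → V) : Prop :=
  2 ≤ m ∧ Function.Injective c ∧ ∀ i : ZMod m, A (c i) (c (i + 1))

/-- `k` pairwise vertex-disjoint directed cycles. -/
def HasKDisjointDicycles {V : Type*} (A : V → V → Prop) (k : ℕ) : Prop :=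
  ∃ (m : Fin k → ℕ) (c : ∀ j, ZMod (m j) → V),
    (∀ j, IsDicycle A (m j) (c j)) ∧
    ∀ j j', j ≠ j' → Disjoint (Set.range (c j)) (Set.range (c j'))

/-- A monochromatic edge-cut: a bipartition with all crossing edges one color. -/
def HasMonochromaticCut {V : Type*} (col : V → V → ℕ) : Prop :=
  ∃ S : Set V, S.Nonempty ∧ Sᶜ.Nonempty ∧ ∃ a, ∀ x ∈ S, ∀ y ∈ Sᶜ, col x y = a

/-- A rainbow triangle: three vertices with pairwise distinct edge colors. -/
def HasRainbowTriangle {V : Type*} (col : V → V → ℕ) : Prop :=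
  ∃ x y z : V, x ≠ y ∧ y ≠ z ∧ x ≠ z ∧
    col x y ≠ col y z ∧ col y z ≠ col x z ∧ col x y ≠ col x z

/-- A Gallai partition of an edge-colored complete graph. -/
def HasGallaiPartition {V : Type*} (col : V → V → ℕ) : Prop :=
  ∃ (q : ℕ) (U : Fin q → Set V), 2 ≤ q ∧ (∀ i, (U i).Nonempty) ∧
    (∀ i j, i ≠ j → Disjoint (U i) (U j)) ∧ (⋃ i, U i) = Set.univ ∧
    (∀ i j, i ≠ j → ∃ a, ∀ x ∈ U i, ∀ y ∈ U j, col x y = a) ∧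
    ∃ a b, ∀ i j, i ≠ j → ∀ x ∈ U i, ∀ y ∈ U j, col x y = a ∨ col x y = b



set_option linter.unusedSectionVars false
set_option linter.deprecated false

namespace Stmt9P
variable {V : Type*} [Fintype V] [DecidableEq V]

section Digraph
variable {Arc : V → V → Prop}

def IsCyc (Arc : V → V → Prop) (l : List V) : Prop :=
  l.Chain' Arc ∧ ∃ u w, l.head? = some u ∧ l.getLast? = some w ∧ Arc w u

lemma isCyc_seg {g : ℕ → V} {s d : ℕ} (hd : d ≠ 0)
    (harcg : ∀ t, Arc (g t) (g (t + 1)))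
    (hwrap : Arc (g (s + (d - 1))) (g s)) :
    IsCyc Arc ((List.range d).map (fun t => g (s + t))) := by
  obtain ⟨e, rfl⟩ : ∃ e, d = e + 1 :=
    ⟨d - 1, (Nat.succ_pred_eq_of_pos (Nat.pos_of_ne_zero hd)).symm⟩
  constructor
  · show List.IsChain Arc _
    rw [List.isChain_map, List.isChain_iff_getElem]
    intro i h
    simp only [List.getElem_range]
    have := harcg (s + i)
    rwa [Nat.add_assoc] at this
  · refine ⟨g (s + 0), g (s + e), ?_, ?_, ?_⟩
    · rw [List.head?_map, List.range_succ_eq_map]; rfl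
    · rw [List.getLast?_map, List.range_succ, List.getLast?_concat]; rfl
    · simpa using hwrap

lemma cyc_exists (R : Set V) (hR : R.Nonempty)
    (hstep : ∀ u ∈ R, ∃ w, Arc u w ∧ w ∈ R) :
    ∃ l, IsCyc Arc l ∧ (∀ u ∈ l, u ∈ R) := by
  classical
  obtain ⟨u0, hu0⟩ := hR
  let f : V → V := fun u => if h : ∃ w, Arc u w ∧ w ∈ R then h.choose else u0
  let g : ℕ → V := fun i => f^[i] u0
  have hgmem : ∀ i, g i ∈ R := by
    intro i
    induction i with
    | zero => exact hu0
    | succ i ih =>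
      have h1 : g (i + 1) = f (g i) := Function.iterate_succ_apply' f i u0
      rw [h1]
      have h : ∃ w, Arc (g i) w ∧ w ∈ R := hstep _ ih
      simp only [f, dif_pos h]
      exact h.choose_spec.2
  have hgarc : ∀ i, Arc (g i) (g (i + 1)) := by
    intro i
    have h1 : g (i + 1) = f (g i) := Function.iterate_succ_apply' f i u0
    rw [h1]
    have h : ∃ w, Arc (g i) w ∧ w ∈ R := hstep _ (hgmem i)
    simp only [f, dif_pos h]
    exact h.choose_spec.1
  obtain ⟨i, j, hij, hgij⟩ := Finite.exists_ne_map_eq_of_infinite g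
  rcases Nat.lt_or_ge i j with hlt | hge
  · refine ⟨_, isCyc_seg (g := g) (s := i) (d := j - i) (by omega) hgarc ?_, ?_⟩
    · have e1 : i + (j - i - 1) = j - 1 := by omega
      have e2 : (j - 1) + 1 = j := by omega
      have h3 := hgarc (j - 1)
      rw [e2, ← hgij] at h3
      rw [e1]
      exact h3
    · intro u hu
      simp only [List.mem_map] at hu
      obtain ⟨t, _, rfl⟩ := hu
      exact hgmem _
  · have hlt : j < i := by omega
    refine ⟨_, isCyc_seg (g := g) (s := j) (d := i - j) (by omega) hgarc ?_, ?_⟩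
    · have e1 : j + (i - j - 1) = i - 1 := by omega
      have e2 : (i - 1) + 1 = i := by omega
      have h3 := hgarc (i - 1)
      rw [e2, hgij] at h3
      rw [e1]
      exact h3
    · intro u hu
      simp only [List.mem_map] at hu
      obtain ⟨t, _, rfl⟩ := hu
      exact hgmem _

lemma find_short (W : Set V) (cl : V → Fin 3)
    (harc : ∀ u w, Arc u w → (u ∈ W ∧ w ∈ W) ∧ cl u ≠ cl w)
    (hcomp : ∀ u ∈ W, ∀ w ∈ W, cl u ≠ cl w → Arc u w ∨ Arc w u)
    (hexcl : ∀ u w, Arc u w → Arc w u → False)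
    (hnt : ∀ p q r, Arc p q → Arc q r → Arc r p → False)
    (R : Set V) (hRW : R ⊆ W) (hR : R.Nonempty)
    (hstep : ∀ u ∈ R, ∃ w, Arc u w ∧ w ∈ R) :
    ∃ c0 c1 c2 c3, c0 ∈ R ∧ c1 ∈ R ∧ c2 ∈ R ∧ c3 ∈ R ∧
      Arc c0 c1 ∧ Arc c1 c2 ∧ Arc c2 c3 ∧ Arc c3 c0 ∧
      cl c0 = cl c2 ∧ cl c1 = cl c3 := by
  classical
  set S : Set ℕ := {m | ∃ l, IsCyc Arc l ∧ (∀ u ∈ l, u ∈ R) ∧ l.length = m} with hS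
  have hSne : S.Nonempty := by
    obtain ⟨l, hl1, hl2⟩ := cyc_exists R hR hstep
    exact ⟨l.length, l, hl1, hl2, rfl⟩
  obtain ⟨l0, hcyc, hmemR, hlen⟩ := Nat.sInf_mem hSne
  have hmin : ∀ m ∈ S, l0.length ≤ m := by
    intro m hm
    rw [hlen]
    exact Nat.sInf_le hm
  have hl0ne : l0 ≠ [] := by
    intro h
    obtain ⟨u, w, hu, -, -⟩ := hcyc.2
    rw [h] at hu; simp at hu
  have hpos : 0 < l0.length := List.length_pos_iff.mpr hl0ne
  let g : ℕ → V := fun i => l0[i % l0.length]'(Nat.mod_lt _ hpos)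
  have gmem : ∀ i, g i ∈ R := fun i => hmemR _ (List.getElem_mem _)
  have gmemW : ∀ i, g i ∈ W := fun i => hRW (gmem i)
  have gper : ∀ i, g (i + l0.length) = g i := by
    intro i; simp only [g, Nat.add_mod_right]
  have garc : ∀ i, Arc (g i) (g (i + 1)) := by
    intro i
    have hrlt : i % l0.length < l0.length := Nat.mod_lt _ hpos
    by_cases h : i % l0.length + 1 < l0.length
    · have hmod : (i + 1) % l0.length = i % l0.length + 1 := by
        conv_lhs => rw [← Nat.div_add_mod i l0.length]
        rw [Nat.add_assoc, Nat.mul_add_mod]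
        exact Nat.mod_eq_of_lt h
      have hc := (List.isChain_iff_getElem.mp hcyc.1) (i % l0.length) (by omega)
      simp only [g, hmod]
      exact hc
    · have hreq : i % l0.length + 1 = l0.length := by omega
      have hmod : (i + 1) % l0.length = 0 := by
        conv_lhs => rw [← Nat.div_add_mod i l0.length]
        rw [Nat.add_assoc, Nat.mul_add_mod, hreq]
        exact Nat.mod_self _
      obtain ⟨u, w, hu, hw, harcwu⟩ := hcyc.2
      have hu' : u = l0[0]'hpos := by
        rw [List.head?_eq_getElem?, List.getElem?_eq_getElem hpos] at hu
        exact (Option.some_inj.mp hu).symm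
      have hw' : w = l0[l0.length - 1]'(by omega) := by
        rw [List.getLast?_eq_getElem?, List.getElem?_eq_getElem (by omega)] at hw
        exact (Option.some_inj.mp hw).symm
      rw [hu', hw'] at harcwu
      simp only [g, hmod]
      have hieq : i % l0.length = l0.length - 1 := by omega
      simp only [hieq]
      exact harcwu
  have hshorter : ∀ (s d : ℕ), d ≠ 0 → d < l0.length →
      Arc (g (s + (d - 1))) (g s) → False := by
    intro s d hd hlt hw
    have hdS : d ∈ S := by
      refine ⟨_, isCyc_seg hd garc hw, ?_, by simp⟩
      intro u hu
      simp only [List.mem_map] at hu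
      obtain ⟨t, _, rfl⟩ := hu
      exact gmem _
    have := hmin d hdS
    omega
  have hlen1 : l0.length ≠ 1 := by
    intro h
    have h1 : g 1 = g 0 := by simp only [g, h]
    have h2 := garc 0
    rw [h1] at h2
    exact (harc _ _ h2).2 rfl
  have hlen2 : l0.length ≠ 2 := by
    intro h
    have h2 : g 2 = g 0 := by
      have h3 := gper 0
      rw [h] at h3
      simpa using h3
    have a1 := garc 0
    have a2 := garc 1
    rw [h2] at a2
    exact hexcl _ _ a1 a2
  have hlen3 : l0.length ≠ 3 := by
    intro h
    have h3 : g 3 = g 0 := by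
      have h4 := gper 0
      rw [h] at h4
      simpa using h4
    have a3 := garc 2
    rw [h3] at a3
    exact hnt _ _ _ (garc 0) (garc 1) a3
  have hlen4 : 4 ≤ l0.length := by omega
  have keystep : ∀ i, cl (g i) = cl (g (i + 2)) := by
    intro i
    by_contra hne'
    rcases hcomp _ (gmemW i) _ (gmemW (i + 2)) hne' with h | h
    · apply hshorter (i + 2) (l0.length - 1) (by omega) (by omega)
      have e1 : (i + 2) + (l0.length - 1 - 1) = i + l0.length := by omega
      rw [e1, gper]
      exact h
    · exact hnt _ _ _ (garc i) (garc (i + 1)) h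
  have keystep2 : ∀ t s, cl (g s) = cl (g (s + 2 * t)) := by
    intro t
    induction t with
    | zero => intro s; simp
    | succ t ih =>
      intro s
      have h5 := keystep (s + 2 * t)
      have e : s + 2 * t + 2 = s + 2 * (t + 1) := by omega
      rw [ih s, h5, e]
  rcases Nat.even_or_odd l0.length with heven | hodd
  · by_cases h4 : l0.length = 4
    · refine ⟨g 0, g 1, g 2, g 3, gmem 0, gmem 1, gmem 2, gmem 3,
        garc 0, garc 1, garc 2, ?_, keystep 0, keystep 1⟩
      have a3 := garc 3
      have h40 : g 4 = g 0 := by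
        have h5 := gper 0
        rw [h4] at h5
        simpa using h5
      rwa [h40] at a3
    · exfalso
      have hlen6 : 6 ≤ l0.length := by
        obtain ⟨t, ht⟩ := heven
        omega
      have hcl03 : cl (g 0) ≠ cl (g 3) := by
        have h13 : cl (g 1) = cl (g 3) := keystep 1
        have h5 := (harc _ _ (garc 0)).2
        rwa [h13] at h5
      rcases hcomp _ (gmemW 0) _ (gmemW 3) hcl03 with h | h
      · apply hshorter 3 (l0.length - 2) (by omega) (by omega)
        have e1 : 3 + (l0.length - 2 - 1) = 0 + l0.length := by omega
        rw [e1, gper]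
        exact h
      · apply hshorter 0 4 (by omega) (by omega)
        simpa using h
  · exfalso
    have hstep2 := keystep2 ((l0.length - 1) / 2) 1
    have e1 : 1 + 2 * ((l0.length - 1) / 2) = l0.length := by
      obtain ⟨t, ht⟩ := hodd
      omega
    rw [e1] at hstep2
    have hlen0 : g l0.length = g 0 := by
      have h5 := gper 0
      simpa using h5
    rw [hlen0] at hstep2
    exact (harc _ _ (garc 0)).2 hstep2.symm

end Digraph
end Stmt9P
namespace Stmt9P
variable {V : Type*} [Fintype V] [DecidableEq V]

lemma LL1 (Arc : V → V → Prop) (P Q : Set V)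
    (harc : ∀ u w, Arc u w → (u ∈ P ∧ w ∈ Q) ∨ (u ∈ Q ∧ w ∈ P))
    (hdisj : Disjoint P Q)
    (hcomp : ∀ u ∈ P, ∀ w ∈ Q, Arc u w ∨ Arc w u)
    (hexcl : ∀ u w, Arc u w → Arc w u → False)
    (hdeg : ∀ u ∈ P ∪ Q, 1 ≤ {w | Arc u w}.ncard)
    (hne : (P ∪ Q).Nonempty) :
    ∃ x y x' y', x ∈ P ∧ y ∈ Q ∧ x' ∈ P ∧ y' ∈ Q ∧
      Arc x y ∧ Arc y x' ∧ Arc x' y' ∧ Arc y' x ∧ x ≠ x' ∧ y ≠ y' := by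
  classical
  have hout : ∀ u, 1 ≤ ({w | Arc u w}).ncard → ∃ w, Arc u w := by
    intro u hu
    have : ({w | Arc u w}).Nonempty := Set.nonempty_of_ncard_ne_zero (by omega)
    exact this
  have hPne : P.Nonempty := by
    obtain ⟨u, hu⟩ := hne
    rcases hu with hu | hu
    · exact ⟨u, hu⟩
    · obtain ⟨w, hw⟩ := hout u (hdeg u (Or.inr hu))
      rcases harc _ _ hw with ⟨h1, _⟩ | ⟨_, h2⟩
      · exact ⟨u, h1⟩
      · exact ⟨w, h2⟩
  obtain ⟨x0, hx0, hmin⟩ := Set.exists_min_image P (fun x => ({w | Arc x w}).ncard)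
    (Set.toFinite P) hPne
  by_contra hno
  have hQside : ∀ x ∈ P, ∀ w, Arc x w → w ∈ Q := by
    intro x hx w hw
    rcases harc _ _ hw with ⟨_, h2⟩ | ⟨h1, _⟩
    · exact h2
    · exact absurd hx (Set.disjoint_right.mp hdisj h1)
  have key : ∀ x ∈ P, ∀ y, Arc x0 y → Arc x y := by
    intro x hx y hy
    by_contra hxy
    have hyQ : y ∈ Q := hQside _ hx0 _ hy
    have hyx : Arc y x := by
      rcases hcomp x hx y hyQ with h | h
      · exact absurd h hxy
      · exact h
    have hxne : x0 ≠ x := by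
      rintro rfl; exact hxy hy
    obtain ⟨y', hy'1, hy'2⟩ : ∃ y', Arc x y' ∧ ¬ Arc x0 y' := by
      by_contra hsub
      push_neg at hsub
      have hss : {w | Arc x w} ⊂ {w | Arc x0 w} := by
        constructor
        · intro w hw; exact hsub w hw
        · intro hss2
          exact hxy (hss2 hy)
      have := Set.ncard_lt_ncard hss (Set.toFinite _)
      have := hmin x hx
      omega
    have hy'Q : y' ∈ Q := hQside _ hx _ hy'1
    have hy'x0 : Arc y' x0 := by
      rcases hcomp x0 hx0 y' hy'Q with h | h
      · exact absurd h hy'2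
      · exact h
    have hyy' : y ≠ y' := by
      rintro rfl; exact hy'2 hy
    exact hno ⟨x0, y, x, y', hx0, hyQ, hx, hy'Q, hy, hyx, hy'1, hy'x0, hxne, hyy'⟩
  obtain ⟨y0, hy0⟩ := hout x0 (hdeg x0 (Or.inl hx0))
  obtain ⟨x1, hx1⟩ := hout y0 (hdeg y0 (Or.inr (hQside _ hx0 _ hy0)))
  have hx1P : x1 ∈ P := by
    rcases harc _ _ hx1 with ⟨h1, _⟩ | ⟨_, h2⟩
    · exact absurd (hQside _ hx0 _ hy0) (Set.disjoint_left.mp hdisj h1)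
    · exact h2
  exact hexcl _ _ (key x1 hx1P y0 hy0) hx1

lemma LL : ∀ (k : ℕ) (Arc : V → V → Prop) (P Q : Set V),
    (∀ u w, Arc u w → (u ∈ P ∧ w ∈ Q) ∨ (u ∈ Q ∧ w ∈ P)) →
    Disjoint P Q →
    (∀ u ∈ P, ∀ w ∈ Q, Arc u w ∨ Arc w u) →
    (∀ u w, Arc u w → Arc w u → False) →
    (∀ u ∈ P ∪ Q, 2 * k ≤ ({w | Arc u w}).ncard + 1) →
    (k ≠ 0 → (P ∪ Q).Nonempty) →
    ∃ t : Fin k → V × V × V × V,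
      (∀ j, (t j).1 ∈ P ∧ (t j).2.1 ∈ Q ∧ (t j).2.2.1 ∈ P ∧ (t j).2.2.2 ∈ Q ∧
        Arc (t j).1 (t j).2.1 ∧ Arc (t j).2.1 (t j).2.2.1 ∧
        Arc (t j).2.2.1 (t j).2.2.2 ∧ Arc (t j).2.2.2 (t j).1 ∧
        (t j).1 ≠ (t j).2.2.1 ∧ (t j).2.1 ≠ (t j).2.2.2) ∧
      (∀ j j', j ≠ j' →
        Disjoint ({(t j).1, (t j).2.1, (t j).2.2.1, (t j).2.2.2} : Set V)
                 {(t j').1, (t j').2.1, (t j').2.2.1, (t j').2.2.2}) := by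
  intro k
  induction k with
  | zero =>
    intro Arc P Q _ _ _ _ _ _
    exact ⟨fun j => j.elim0, fun j => j.elim0, fun j => j.elim0⟩
  | succ k ih =>
    intro Arc P Q harc hdisj hcomp hexcl hdeg hne
    have hne' := hne (Nat.succ_ne_zero k)
    have hdeg1 : ∀ u ∈ P ∪ Q, 1 ≤ ({w | Arc u w}).ncard := by
      intro u hu
      have := hdeg u hu
      omega
    obtain ⟨x, y, x', y', hxP, hyQ, hx'P, hy'Q, a1, a2, a3, a4, hxx', hyy'⟩ :=
      LL1 Arc P Q harc hdisj hcomp hexcl hdeg1 hne'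
    set P' : Set V := P \ {x, x'} with hP'
    set Q' : Set V := Q \ {y, y'} with hQ'
    set Arc' : V → V → Prop := fun u w => Arc u w ∧ (u ∈ P' ∪ Q') ∧ (w ∈ P' ∪ Q') with hArc'
    have hPP : P' ⊆ P := Set.diff_subset
    have hQQ : Q' ⊆ Q := Set.diff_subset
    have memP' : ∀ u, u ∈ P' ∪ Q' → u ∈ P → u ∈ P' := by
      intro u hu huP
      rcases hu with h | h
      · exact h
      · exact absurd huP (Set.disjoint_right.mp hdisj (hQQ h))
    have memQ' : ∀ u, u ∈ P' ∪ Q' → u ∈ Q → u ∈ Q' := by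
      intro u hu huQ
      rcases hu with h | h
      · exact absurd huQ (Set.disjoint_left.mp hdisj (hPP h))
      · exact h
    have harc' : ∀ u w, Arc' u w → (u ∈ P' ∧ w ∈ Q') ∨ (u ∈ Q' ∧ w ∈ P') := by
      intro u w ⟨hw, hu2, hw2⟩
      rcases harc _ _ hw with ⟨h1, h2⟩ | ⟨h1, h2⟩
      · exact Or.inl ⟨memP' _ hu2 h1, memQ' _ hw2 h2⟩
      · exact Or.inr ⟨memQ' _ hu2 h1, memP' _ hw2 h2⟩
    have hdisj' : Disjoint P' Q' := hdisj.mono hPP hQQ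
    have hcomp' : ∀ u ∈ P', ∀ w ∈ Q', Arc' u w ∨ Arc' w u := by
      intro u hu w hw
      rcases hcomp u (hPP hu) w (hQQ hw) with h | h
      · exact Or.inl ⟨h, Or.inl hu, Or.inr hw⟩
      · exact Or.inr ⟨h, Or.inr hw, Or.inl hu⟩
    have hexcl' : ∀ u w, Arc' u w → Arc' w u → False :=
      fun u w h1 h2 => hexcl u w h1.1 h2.1
    have hdegsub : ∀ u ∈ P' ∪ Q', ∃ s1 s2 : V,
        {w | Arc u w} ⊆ {w | Arc' u w} ∪ {s1, s2} := by
      intro u hu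
      rcases hu with hu | hu
      · refine ⟨y, y', ?_⟩
        intro w hw
        have hwQ : w ∈ Q := by
          rcases harc _ _ hw with ⟨h1, h2⟩ | ⟨h1, h2⟩
          · exact h2
          · exact absurd (hPP hu) (Set.disjoint_right.mp hdisj h1)
        by_cases hmem : w ∈ ({y, y'} : Set V)
        · exact Or.inr hmem
        · left
          simp only [Set.mem_insert_iff, Set.mem_singleton_iff, not_or] at hmem
          exact ⟨hw, Or.inl hu, Or.inr ⟨hwQ, by simp [hmem.1, hmem.2]⟩⟩
      · refine ⟨x, x', ?_⟩
        intro w hw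
        have hwP : w ∈ P := by
          rcases harc _ _ hw with ⟨h1, h2⟩ | ⟨h1, h2⟩
          · exact absurd (hQQ hu) (Set.disjoint_left.mp hdisj h1)
          · exact h2
        by_cases hmem : w ∈ ({x, x'} : Set V)
        · exact Or.inr hmem
        · left
          simp only [Set.mem_insert_iff, Set.mem_singleton_iff, not_or] at hmem
          exact ⟨hw, Or.inr hu, Or.inl ⟨hwP, by simp [hmem.1, hmem.2]⟩⟩
    have hcard2 : ∀ u ∈ P' ∪ Q', ({w | Arc u w}).ncard ≤ ({w | Arc' u w}).ncard + 2 := by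
      intro u hu
      obtain ⟨s1, s2, hsub⟩ := hdegsub u hu
      have h1 := Set.ncard_le_ncard hsub (Set.toFinite _)
      have h2 := Set.ncard_union_le ({w | Arc' u w}) ({s1, s2} : Set V)
      have h3 : ({s1, s2} : Set V).ncard ≤ 2 := by
        have := Set.ncard_insert_le s1 ({s2} : Set V)
        simpa using this
      omega
    have hdeg' : ∀ u ∈ P' ∪ Q', 2 * k ≤ ({w | Arc' u w}).ncard + 1 := by
      intro u hu
      have hu2 : u ∈ P ∪ Q := by
        rcases hu with h | h
        · exact Or.inl (hPP h)
        · exact Or.inr (hQQ h)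
      have := hdeg u hu2
      have := hcard2 u hu
      omega
    have hne'' : k ≠ 0 → (P' ∪ Q').Nonempty := by
      intro hk
      have hdx := hdeg x (Or.inl hxP)
      have hxQside : {w | Arc x w} ⊆ Q := by
        intro w hw
        rcases harc _ _ hw with ⟨h1, h2⟩ | ⟨h1, h2⟩
        · exact h2
        · exact absurd hxP (Set.disjoint_right.mp hdisj h1)
      have hsub : {w | Arc x w} ⊆ ({w | Arc x w} \ {y, y'}) ∪ {y, y'} := by
        intro w hw
        by_cases hm : w ∈ ({y, y'} : Set V)
        · exact Or.inr hm
        · exact Or.inl ⟨hw, hm⟩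
      have h1 := Set.ncard_le_ncard hsub (Set.toFinite _)
      have h2 := Set.ncard_union_le ({w | Arc x w} \ {y, y'}) ({y, y'} : Set V)
      have h3 : ({y, y'} : Set V).ncard ≤ 2 := by
        have := Set.ncard_insert_le y ({y'} : Set V)
        simpa using this
      have h4 : 1 ≤ ({w | Arc x w} \ {y, y'}).ncard := by omega
      obtain ⟨w, hw1, hw2⟩ := Set.nonempty_of_ncard_ne_zero (s := {w | Arc x w} \ {y, y'}) (by omega)
      refine ⟨w, Or.inr ⟨hxQside hw1, ?_⟩⟩
      simpa using hw2
    obtain ⟨t', ht'1, ht'2⟩ := ih Arc' P' Q' harc' hdisj' hcomp' hexcl' hdeg' hne''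
    have hquadsub : ∀ j, ({(t' j).1, (t' j).2.1, (t' j).2.2.1, (t' j).2.2.2} : Set V) ⊆ P' ∪ Q' := by
      intro j u hu
      obtain ⟨m1, m2, m3, m4, -⟩ := ht'1 j
      rcases hu with rfl | rfl | rfl | rfl
      · exact Or.inl m1
      · exact Or.inr m2
      · exact Or.inl m3
      · exact Or.inr m4
    have hheadout : ∀ u ∈ ({x, y, x', y'} : Set V), u ∉ P' ∪ Q' := by
      intro u hu h2
      rcases hu with rfl | rfl | rfl | rfl
      · rcases h2 with h | h
        · exact h.2 (by simp)
        · exact Set.disjoint_left.mp hdisj hxP (hQQ h)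
      · rcases h2 with h | h
        · exact Set.disjoint_left.mp hdisj (hPP h) hyQ
        · exact h.2 (by simp)
      · rcases h2 with h | h
        · exact h.2 (by simp)
        · exact Set.disjoint_left.mp hdisj hx'P (hQQ h)
      · rcases h2 with h | h
        · exact Set.disjoint_left.mp hdisj (hPP h) hy'Q
        · exact h.2 (by simp)
    refine ⟨Fin.cons (x, y, x', y') t', ?_, ?_⟩
    · intro j
      rcases Fin.eq_zero_or_eq_succ j with rfl | ⟨j, rfl⟩
      · simp only [Fin.cons_zero]
        exact ⟨hxP, hyQ, hx'P, hy'Q, a1, a2, a3, a4, hxx', hyy'⟩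
      · simp only [Fin.cons_succ]
        obtain ⟨m1, m2, m3, m4, b1, b2, b3, b4, d1, d2⟩ := ht'1 j
        exact ⟨hPP m1, hQQ m2, hPP m3, hQQ m4, b1.1, b2.1, b3.1, b4.1, d1, d2⟩
    · intro j j' hjj'
      rcases Fin.eq_zero_or_eq_succ j with rfl | ⟨j, rfl⟩ <;>
        rcases Fin.eq_zero_or_eq_succ j' with rfl | ⟨j', rfl⟩
      · exact absurd rfl hjj'
      · simp only [Fin.cons_zero, Fin.cons_succ]
        rw [Set.disjoint_right]
        intro u hu hu2
        exact hheadout u hu2 (hquadsub j' hu)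
      · simp only [Fin.cons_zero, Fin.cons_succ]
        rw [Set.disjoint_left]
        intro u hu hu2
        exact hheadout u hu2 (hquadsub j hu)
      · simp only [Fin.cons_succ]
        exact ht'2 j j' (fun h => hjj' (by rw [h]))
end Stmt9P
namespace Stmt9P
variable {V : Type*} [Fintype V] [DecidableEq V]

def cy3 (p q r : V) : ZMod 3 → V := fun i => if i = 0 then p else if i = 1 then q else r
def cy4 (p q r s : V) : ZMod 4 → V :=
  fun i => if i = 0 then p else if i = 1 then q else if i = 2 then r else s

lemma zmod3_cases : ∀ i : ZMod 3, i = 0 ∨ i = 1 ∨ i = 2 := by decide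
lemma zmod4_cases : ∀ i : ZMod 4, i = 0 ∨ i = 1 ∨ i = 2 ∨ i = 3 := by decide

lemma cy3_spec (p q r : V) (col : V → V → ℕ)
    (h1 : col p q ≠ col q r) (h2 : col q r ≠ col r p) (h3 : col r p ≠ col p q) :
    ∀ i : ZMod 3, col (cy3 p q r i) (cy3 p q r (i+1)) ≠ col (cy3 p q r (i+1)) (cy3 p q r (i+2)) := by
  intro i
  rcases zmod3_cases i with h|h|h <;> subst h <;> simp +decide [cy3] <;> assumption

lemma cy3_inj (p q r : V) (hpq : p ≠ q) (hqr : q ≠ r) (hpr : p ≠ r) :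
    Function.Injective (cy3 p q r) := by
  intro i j h
  rcases zmod3_cases i with hi|hi|hi <;> rcases zmod3_cases j with hj|hj|hj <;>
    subst hi <;> subst hj <;> simp +decide [cy3] at h ⊢ <;> tauto

lemma cy3_range (p q r : V) : Set.range (cy3 p q r) = {p,q,r} := by
  ext u
  constructor
  · rintro ⟨i,hi⟩; rcases zmod3_cases i with h|h|h <;> subst h <;>
      simp +decide [cy3] at hi <;> simp [← hi]
  · rintro (h|h|h)
    exacts [⟨0, by simp +decide [cy3, h]⟩, ⟨1, by simp +decide [cy3]; simp_all⟩,
      ⟨2, by simp +decide [cy3]; simp_all⟩]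

lemma cy3_arc (Arc : V → V → Prop) (p q r : V) (h1 : Arc p q) (h2 : Arc q r) (h3 : Arc r p) :
    ∀ i : ZMod 3, Arc (cy3 p q r i) (cy3 p q r (i+1)) := by
  intro i
  rcases zmod3_cases i with h|h|h <;> subst h <;> simp +decide [cy3] <;> assumption

lemma cy4_spec (p q r s : V) (col : V → V → ℕ)
    (h1 : col p q ≠ col q r) (h2 : col q r ≠ col r s) (h3 : col r s ≠ col s p)
    (h4 : col s p ≠ col p q) :
    ∀ i : ZMod 4, col (cy4 p q r s i) (cy4 p q r s (i+1)) ≠ col (cy4 p q r s (i+1)) (cy4 p q r s (i+2)) := by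
  intro i
  rcases zmod4_cases i with h|h|h|h <;> subst h <;> simp +decide [cy4] <;> assumption

lemma cy4_inj (p q r s : V) (h1 : p ≠ q) (h2 : p ≠ r) (h3 : p ≠ s) (h4 : q ≠ r) (h5 : q ≠ s)
    (h6 : r ≠ s) : Function.Injective (cy4 p q r s) := by
  intro i j h
  rcases zmod4_cases i with hi|hi|hi|hi <;> rcases zmod4_cases j with hj|hj|hj|hj <;>
    subst hi <;> subst hj <;> simp +decide [cy4] at h ⊢ <;> tauto

lemma cy4_range (p q r s : V) : Set.range (cy4 p q r s) = {p,q,r,s} := by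
  ext u
  constructor
  · rintro ⟨i,hi⟩; rcases zmod4_cases i with h|h|h|h <;> subst h <;>
      simp +decide [cy4] at hi <;> simp [← hi]
  · rintro (h|h|h|h)
    exacts [⟨0, by simp +decide [cy4, h]⟩, ⟨1, by simp +decide [cy4]; simp_all⟩,
      ⟨2, by simp +decide [cy4]; simp_all⟩, ⟨3, by simp +decide [cy4]; simp_all⟩]

lemma cy4_arc (Arc : V → V → Prop) (p q r s : V) (h1 : Arc p q) (h2 : Arc q r) (h3 : Arc r s)
    (h4 : Arc s p) : ∀ i : ZMod 4, Arc (cy4 p q r s i) (cy4 p q r s (i+1)) := by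
  intro i
  rcases zmod4_cases i with h|h|h|h <;> subst h <;> simp +decide [cy4] <;> assumption

lemma fin3cover : ∀ a b c x : Fin 3, a ≠ b → c ≠ a → c ≠ b → x = a ∨ x = b ∨ x = c := by decide

lemma rtg_flip {Arc : V → V → Prop} {a b : V} (h : Relation.ReflTransGen Arc a b) :
    Relation.ReflTransGen (fun u w => Arc w u) b a := by
  induction h with
  | refl => exact Relation.ReflTransGen.refl
  | tail _ h2 ih => exact Relation.ReflTransGen.head h2 ih

lemma Tri (Arc : V → V → Prop) (W : Set V) (cl : V → Fin 3)
    (harc : ∀ u w, Arc u w → (u ∈ W ∧ w ∈ W) ∧ cl u ≠ cl w)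
    (hcomp : ∀ u ∈ W, ∀ w ∈ W, cl u ≠ cl w → Arc u w ∨ Arc w u)
    (hexcl : ∀ u w, Arc u w → Arc w u → False)
    (hnt : ∀ p q r, Arc p q → Arc q r → Arc r p → False)
    (c0 c1 c2 c3 : V)
    (a01 : Arc c0 c1) (a12 : Arc c1 c2) (a23 : Arc c2 c3) (a30 : Arc c3 c0)
    (h02 : cl c0 = cl c2) (h13 : cl c1 = cl c3)
    (z : V) (hz0 : cl z ≠ cl c0) (hz1 : cl z ≠ cl c1)
    (dom0 : Arc c0 z) (dom1 : Arc c1 z) (dom2 : Arc c2 z) (dom3 : Arc c3 z)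
    (hreach : Relation.ReflTransGen Arc z c0) : False := by
  have key : ∀ p q r, Arc p q → Arc q r → cl p ≠ cl r → Arc p r := by
    intro p q r h1 h2 hne
    rcases hcomp p (harc _ _ h1).1.1 r (harc _ _ h2).1.2 hne with h | h
    · exact h
    · exact (hnt _ _ _ h1 h2 h).elim
  have hc01 : cl c0 ≠ cl c1 := (harc _ _ a01).2
  set Cdom : V → Prop := fun ζ => Arc c0 ζ ∧ Arc c1 ζ ∧ Arc c2 ζ ∧ Arc c3 ζ with hCdom
  set Good : V → Prop := fun g =>
    g ≠ c0 ∧ g ≠ c1 ∧ g ≠ c2 ∧ g ≠ c3 ∧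
    ((cl g = cl z ∧ Cdom g) ∨
     (cl g = cl c0 ∧ Arc c1 g ∧ Arc c3 g ∧ ∃ ζ, cl ζ = cl z ∧ Cdom ζ ∧ Arc ζ g) ∨
     (cl g = cl c1 ∧ Arc c0 g ∧ Arc c2 g ∧ ∃ ζ, cl ζ = cl z ∧ Cdom ζ ∧ Arc ζ g)) with hGood
  have trich : ∀ x : Fin 3, x = cl c0 ∨ x = cl c1 ∨ x = cl z :=
    fun x => fin3cover (cl c0) (cl c1) (cl z) x hc01 hz0 hz1
  have step : ∀ g w, Good g → Arc g w → Good w := by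
    intro g w hg hgw
    obtain ⟨g0, g1, g2, g3, hbr⟩ := hg
    have hclgw : cl g ≠ cl w := (harc _ _ hgw).2
    rcases hbr with ⟨hgz, d0, d1, d2, d3⟩ | ⟨hg0, b1, b3, ζ, hζz, hζd, hζg⟩ |
      ⟨hg1, b0, b2, ζ, hζz, hζd, hζg⟩
    · -- g in z-class, dominated by all of C
      have hw0 : w ≠ c0 := by rintro rfl; exact hexcl _ _ hgw d0
      have hw1 : w ≠ c1 := by rintro rfl; exact hexcl _ _ hgw d1
      have hw2 : w ≠ c2 := by rintro rfl; exact hexcl _ _ hgw d2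
      have hw3 : w ≠ c3 := by rintro rfl; exact hexcl _ _ hgw d3
      refine ⟨hw0, hw1, hw2, hw3, ?_⟩
      rcases trich (cl w) with hw | hw | hw
      · -- w in class of c0
        have e1 : Arc c1 w := key c1 g w d1 hgw (by rw [hw]; exact hc01.symm)
        have e3 : Arc c3 w := key c3 g w d3 hgw (by rw [hw, ← h13]; exact hc01.symm)
        exact Or.inr (Or.inl ⟨hw, e1, e3, g, hgz, ⟨d0, d1, d2, d3⟩, hgw⟩)
      · -- w in class of c1
        have e0 : Arc c0 w := key c0 g w d0 hgw (by rw [hw]; exact hc01)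
        have e2 : Arc c2 w := key c2 g w d2 hgw (by rw [hw, ← h02]; exact hc01)
        exact Or.inr (Or.inr ⟨hw, e0, e2, g, hgz, ⟨d0, d1, d2, d3⟩, hgw⟩)
      · exact absurd (hw ▸ hclgw) (by rw [hgz]; simp)
    · -- g in class of c0
      have hw0 : w ≠ c0 := by rintro rfl; exact hclgw hg0
      have hw2 : w ≠ c2 := by rintro rfl; exact hclgw (hg0.trans h02)
      have hw1 : w ≠ c1 := by rintro rfl; exact hexcl _ _ hgw b1
      have hw3 : w ≠ c3 := by rintro rfl; exact hexcl _ _ hgw b3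
      refine ⟨hw0, hw1, hw2, hw3, ?_⟩
      rcases trich (cl w) with hw | hw | hw
      · exact absurd (hw ▸ hclgw) (by rw [hg0]; simp)
      · -- w in class of c1
        have eζ : Arc ζ w := key ζ g w hζg hgw (by rw [hζz, hw]; exact hz1)
        have e0 : Arc c0 w := key c0 ζ w hζd.1 eζ (by rw [hw]; exact hc01)
        have e2 : Arc c2 w := key c2 ζ w hζd.2.2.1 eζ (by rw [hw, ← h02]; exact hc01)
        exact Or.inr (Or.inr ⟨hw, e0, e2, ζ, hζz, hζd, eζ⟩)
      · -- w in class of z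
        have e1 : Arc c1 w := key c1 g w b1 hgw (by rw [hw]; exact hz1.symm)
        have e3 : Arc c3 w := key c3 g w b3 hgw (by rw [hw, ← h13]; exact hz1.symm)
        have e0 : Arc c0 w := key c0 c1 w a01 e1 (by rw [hw]; exact hz0.symm)
        have e2 : Arc c2 w := key c2 c3 w a23 e3 (by rw [hw, ← h02]; exact hz0.symm)
        exact Or.inl ⟨hw, e0, e1, e2, e3⟩
    · -- g in class of c1
      have hw1 : w ≠ c1 := by rintro rfl; exact hclgw hg1
      have hw3 : w ≠ c3 := by rintro rfl; exact hclgw (hg1.trans h13)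
      have hw0 : w ≠ c0 := by rintro rfl; exact hexcl _ _ hgw b0
      have hw2 : w ≠ c2 := by rintro rfl; exact hexcl _ _ hgw b2
      refine ⟨hw0, hw1, hw2, hw3, ?_⟩
      rcases trich (cl w) with hw | hw | hw
      · -- w in class of c0
        have eζ : Arc ζ w := key ζ g w hζg hgw (by rw [hζz, hw]; exact hz0)
        have e1 : Arc c1 w := key c1 ζ w hζd.2.1 eζ (by rw [hw]; exact hc01.symm)
        have e3 : Arc c3 w := key c3 ζ w hζd.2.2.2 eζ (by rw [hw, ← h13]; exact hc01.symm)
        exact Or.inr (Or.inl ⟨hw, e1, e3, ζ, hζz, hζd, eζ⟩)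
      · exact absurd (hw ▸ hclgw) (by rw [hg1]; simp)
      · -- w in class of z
        have e0 : Arc c0 w := key c0 g w b0 hgw (by rw [hw]; exact hz0.symm)
        have e2 : Arc c2 w := key c2 g w b2 hgw (by rw [hw, ← h02]; exact hz0.symm)
        have e1 : Arc c1 w := key c1 c2 w a12 e2 (by rw [hw]; exact hz1.symm)
        have e3 : Arc c3 w := key c3 c0 w a30 e0 (by rw [hw, ← h13]; exact hz1.symm)
        exact Or.inl ⟨hw, e0, e1, e2, e3⟩
  have goodz : Good z := by
    refine ⟨?_, ?_, ?_, ?_, Or.inl ⟨rfl, dom0, dom1, dom2, dom3⟩⟩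
    · rintro rfl; exact hz0 rfl
    · rintro rfl; exact hz1 rfl
    · rintro rfl; exact hz0 h02.symm
    · rintro rfl; exact hz1 h13.symm
  have hgood : ∀ w, Relation.ReflTransGen Arc z w → Good w := by
    intro w h
    induction h with
    | refl => exact goodz
    | tail _ h2 ih => exact step _ _ ih h2
  exact (hgood c0 hreach).1 rfl

end Stmt9P
namespace Stmt9P
variable {V : Type*} [Fintype V] [DecidableEq V]

lemma lemT : ∀ (k : ℕ) (Arc : V → V → Prop) (W : Set V) (cl : V → Fin 3),
    (∀ u w, Arc u w → (u ∈ W ∧ w ∈ W) ∧ cl u ≠ cl w) →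
    (∀ u ∈ W, ∀ w ∈ W, cl u ≠ cl w → Arc u w ∨ Arc w u) →
    (∀ u w, Arc u w → Arc w u → False) →
    (∀ u ∈ W, 2 * k ≤ ({w | Arc u w}).ncard + 1) →
    (k ≠ 0 → W.Nonempty) →
    ∃ F : Fin k → (Σ m : ℕ, (ZMod m → V)),
      (∀ j, ((F j).1 = 3 ∨ (F j).1 = 4) ∧ Function.Injective (F j).2 ∧
        (∀ i, Arc ((F j).2 i) ((F j).2 (i + 1))) ∧ Set.range (F j).2 ⊆ W) ∧
      (∀ j j', j ≠ j' → Disjoint (Set.range (F j).2) (Set.range (F j').2)) := by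
  intro k
  induction k with
  | zero =>
    intro Arc W cl _ _ _ _ _
    exact ⟨fun j => j.elim0, fun j => j.elim0, fun j => j.elim0⟩
  | succ k ih =>
    intro Arc W cl harc hcomp hexcl hdeg hne
    have hWne : W.Nonempty := hne (Nat.succ_ne_zero k)
    by_cases htri : ∃ p q r, Arc p q ∧ Arc q r ∧ Arc r p
    · -- triangle case: peel it off and recurse
      obtain ⟨p, q, r, h1, h2, h3⟩ := htri
      have hpW : p ∈ W := (harc _ _ h1).1.1
      have hqW : q ∈ W := (harc _ _ h2).1.1
      have hrW : r ∈ W := (harc _ _ h3).1.1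
      have cpq : cl p ≠ cl q := (harc _ _ h1).2
      have cqr : cl q ≠ cl r := (harc _ _ h2).2
      have crp : cl r ≠ cl p := (harc _ _ h3).2
      set W' : Set V := W \ {p, q, r} with hW'
      set Arc' : V → V → Prop := fun u w => Arc u w ∧ u ∈ W' ∧ w ∈ W' with hArc'
      have harc' : ∀ u w, Arc' u w → (u ∈ W' ∧ w ∈ W') ∧ cl u ≠ cl w :=
        fun u w h => ⟨⟨h.2.1, h.2.2⟩, (harc _ _ h.1).2⟩
      have hcomp' : ∀ u ∈ W', ∀ w ∈ W', cl u ≠ cl w → Arc' u w ∨ Arc' w u := by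
        intro u hu w hw hne2
        rcases hcomp u hu.1 w hw.1 hne2 with h | h
        · exact Or.inl ⟨h, hu, hw⟩
        · exact Or.inr ⟨h, hw, hu⟩
      have hexcl' : ∀ u w, Arc' u w → Arc' w u → False :=
        fun u w ha hb => hexcl u w ha.1 hb.1
      have hdegsub : ∀ u ∈ W', ∃ s1 s2 : V, {w | Arc u w} ⊆ {w | Arc' u w} ∪ {s1, s2} := by
        intro u hu
        have hnotout : ∀ x, cl u = cl x → ¬ Arc u x := by
          intro x hcl hax
          exact (harc _ _ hax).2 hcl
        have hgen : ∀ s1 s2 : V, (∀ w, Arc u w → w ≠ s1 → w ≠ s2 → w ∈ W') →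
            {w | Arc u w} ⊆ {w | Arc' u w} ∪ {s1, s2} := by
          intro s1 s2 hmem w hw
          by_cases e1 : w = s1
          · exact Or.inr (by simp [e1])
          by_cases e2 : w = s2
          · exact Or.inr (by simp [e2])
          · exact Or.inl ⟨hw, hu, hmem w hw e1 e2⟩
        rcases fin3cover (cl p) (cl q) (cl r) (cl u) cpq crp cqr.symm with hcu | hcu | hcu
        · refine ⟨q, r, hgen q r ?_⟩
          intro w hw e1 e2
          refine ⟨(harc _ _ hw).1.2, ?_⟩
          simp only [Set.mem_insert_iff, Set.mem_singleton_iff]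
          push_neg
          refine ⟨?_, e1, e2⟩
          intro hwp; rw [hwp] at hw; exact hnotout p hcu hw
        · refine ⟨p, r, hgen p r ?_⟩
          intro w hw e1 e2
          refine ⟨(harc _ _ hw).1.2, ?_⟩
          simp only [Set.mem_insert_iff, Set.mem_singleton_iff]
          push_neg
          refine ⟨e1, ?_, e2⟩
          intro hwp; rw [hwp] at hw; exact hnotout q hcu hw
        · refine ⟨p, q, hgen p q ?_⟩
          intro w hw e1 e2
          refine ⟨(harc _ _ hw).1.2, ?_⟩
          simp only [Set.mem_insert_iff, Set.mem_singleton_iff]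
          push_neg
          refine ⟨e1, e2, ?_⟩
          intro hwp; rw [hwp] at hw; exact hnotout r hcu hw
      have hdeg' : ∀ u ∈ W', 2 * k ≤ ({w | Arc' u w}).ncard + 1 := by
        intro u hu
        obtain ⟨s1, s2, hsub⟩ := hdegsub u hu
        have hA := Set.ncard_le_ncard hsub (Set.toFinite _)
        have hB := Set.ncard_union_le ({w | Arc' u w}) ({s1, s2} : Set V)
        have hC : ({s1, s2} : Set V).ncard ≤ 2 := by
          have := Set.ncard_insert_le s1 ({s2} : Set V)
          simpa using this
        have hD := hdeg u hu.1
        omega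
      have hne' : k ≠ 0 → W'.Nonempty := by
        intro hk
        have hdp := hdeg p hpW
        have hsub : {w | Arc p w} ⊆ ({w | Arc p w} \ {q, r}) ∪ {q, r} := by
          intro w hw
          by_cases hm : w ∈ ({q, r} : Set V)
          · exact Or.inr hm
          · exact Or.inl ⟨hw, hm⟩
        have hA := Set.ncard_le_ncard hsub (Set.toFinite _)
        have hB := Set.ncard_union_le ({w | Arc p w} \ {q, r}) ({q, r} : Set V)
        have hC : ({q, r} : Set V).ncard ≤ 2 := by
          have := Set.ncard_insert_le q ({r} : Set V)
          simpa using this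
        obtain ⟨w, hw1, hw2⟩ := Set.nonempty_of_ncard_ne_zero
          (s := {w | Arc p w} \ {q, r}) (by omega)
        simp only [Set.mem_insert_iff, Set.mem_singleton_iff, not_or] at hw2
        refine ⟨w, (harc _ _ hw1).1.2, ?_⟩
        simp only [Set.mem_insert_iff, Set.mem_singleton_iff]
        push_neg
        refine ⟨?_, hw2.1, hw2.2⟩
        rintro rfl
        exact (harc _ _ hw1).2 rfl
      obtain ⟨F', hF'1, hF'2⟩ := ih Arc' W' cl harc' hcomp' hexcl' hdeg' hne'
      have hWsub' : W' ⊆ W := Set.diff_subset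
      have hpqr : p ≠ q ∧ q ≠ r ∧ p ≠ r := by
        refine ⟨?_, ?_, ?_⟩
        · rintro rfl; exact cpq rfl
        · rintro rfl; exact cqr rfl
        · rintro rfl; exact crp rfl
      refine ⟨Fin.cons (⟨3, cy3 p q r⟩ : Σ m : ℕ, (ZMod m → V)) F', ?_, ?_⟩
      · intro j
        rcases Fin.eq_zero_or_eq_succ j with rfl | ⟨j, rfl⟩
        · rw [Fin.cons_zero]
          refine ⟨Or.inl rfl, cy3_inj p q r hpqr.1 hpqr.2.1 hpqr.2.2,
            cy3_arc Arc p q r h1 h2 h3, ?_⟩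
          rw [cy3_range]
          rintro u (rfl | rfl | rfl)
          exacts [hpW, hqW, hrW]
        · rw [Fin.cons_succ]
          obtain ⟨hm, hinj, harcs, hrange⟩ := hF'1 j
          exact ⟨hm, hinj, fun i => (harcs i).1, hrange.trans hWsub'⟩
      · intro j j' hjj'
        have hhead : Set.range ((⟨3, cy3 p q r⟩ : Σ m : ℕ, (ZMod m → V)).2) = {p, q, r} :=
          cy3_range p q r
        have htail : ∀ j, Set.range ((F' j).2) ⊆ W' := fun j => (hF'1 j).2.2.2
        have hdisj0 : ∀ j, Disjoint (Set.range (cy3 p q r)) (Set.range ((F' j).2)) := by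
          intro j
          rw [Set.disjoint_right]
          intro u hu hu2
          have := htail j hu
          rw [cy3_range] at hu2
          exact this.2 hu2
        rcases Fin.eq_zero_or_eq_succ j with rfl | ⟨j, rfl⟩ <;>
          rcases Fin.eq_zero_or_eq_succ j' with rfl | ⟨j', rfl⟩
        · exact absurd rfl hjj'
        · rw [Fin.cons_succ, Fin.cons_zero]
          exact hdisj0 j'
        · rw [Fin.cons_succ, Fin.cons_zero]
          exact (hdisj0 j).symm
        · rw [Fin.cons_succ, Fin.cons_succ]
          exact hF'2 j j' (fun h => hjj' (by rw [h]))
    · -- no triangle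
      have hnt : ∀ p q r, Arc p q → Arc q r → Arc r p → False :=
        fun p q r h1 h2 h3 => htri ⟨p, q, r, h1, h2, h3⟩
      -- minimal closed set R
      set Cl : Set (Set V) := {S | S ⊆ W ∧ S.Nonempty ∧ ∀ u ∈ S, ∀ w, Arc u w → w ∈ S} with hCl
      have hWCl : W ∈ Cl := ⟨subset_rfl, hWne, fun u _ w hw => (harc _ _ hw).1.2⟩
      set M : Set ℕ := {m | ∃ S ∈ Cl, S.ncard = m} with hM
      have hMne : M.Nonempty := ⟨W.ncard, W, hWCl, rfl⟩
      obtain ⟨R, hRCl, hRcard⟩ := Nat.sInf_mem hMne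
      have hminR : ∀ T, T ⊆ R → T ∈ Cl → T = R := by
        intro T hTR hTCl
        refine Set.eq_of_subset_of_ncard_le hTR ?_ (Set.toFinite R)
        rw [hRcard]
        exact Nat.sInf_le ⟨T, hTCl, rfl⟩
      obtain ⟨hRW, hRne, hRclosed⟩ := hRCl
      have hreachall : ∀ u ∈ R, ∀ w ∈ R, Relation.ReflTransGen Arc u w := by
        intro u hu w hw
        have hT : {t | t ∈ R ∧ Relation.ReflTransGen Arc u t} = R := by
          apply hminR
          · exact fun t ht => ht.1
          · refine ⟨fun t ht => hRW ht.1, ⟨u, hu, Relation.ReflTransGen.refl⟩, ?_⟩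
            intro t ht s hs
            exact ⟨hRclosed t ht.1 s hs, ht.2.tail hs⟩
        rw [← hT] at hw
        exact hw.2
      have hstepR : ∀ u ∈ R, ∃ w, Arc u w ∧ w ∈ R := by
        intro u hu
        have := hdeg u (hRW hu)
        obtain ⟨w, hw⟩ := Set.nonempty_of_ncard_ne_zero (s := {w | Arc u w}) (by omega)
        exact ⟨w, hw, hRclosed u hu w hw⟩
      obtain ⟨c0, c1, c2, c3, hc0R, hc1R, hc2R, hc3R, a01, a12, a23, a30, h02, h13⟩ :=
        find_short W cl harc hcomp hexcl hnt R hRW hRne hstepR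
      have hc01 : cl c0 ≠ cl c1 := (harc _ _ a01).2
      by_cases hz : ∃ z ∈ R, cl z ≠ cl c0 ∧ cl z ≠ cl c1
      · exfalso
        obtain ⟨z, hzR, hz0, hz1⟩ := hz
        have triOut : Arc z c0 → Arc z c1 → Arc z c2 → Arc z c3 → False := by
          intro o0 o1 o2 o3
          refine Tri (fun u w => Arc w u) W cl ?_ ?_ ?_ ?_ c0 c3 c2 c1 a30 a23 a12 a01
            h02 h13.symm z hz0 (fun h => hz1 (h.trans h13.symm)) o0 o3 o2 o1 ?_
          · exact fun u w h => ⟨⟨(harc _ _ h).1.2, (harc _ _ h).1.1⟩, (harc _ _ h).2.symm⟩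
          · intro u hu w hw hnuw
            show Arc w u ∨ Arc u w
            exact hcomp w hw u hu hnuw.symm
          · exact fun u w hA hB => hexcl w u hA hB
          · exact fun p q r hA hB hC => hnt r q p hB hA hC
          · exact rtg_flip (hreachall c0 hc0R z hzR)
        have triIn : Arc c0 z → Arc c1 z → Arc c2 z → Arc c3 z → False := by
          intro i0 i1 i2 i3
          exact Tri Arc W cl harc hcomp hexcl hnt c0 c1 c2 c3 a01 a12 a23 a30 h02 h13
            z hz0 hz1 i0 i1 i2 i3 (hreachall z hzR c0 hc0R)
        have hzW : z ∈ W := hRW hzR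
        have g0 := hcomp c0 (hRW hc0R) z hzW (fun h => hz0 h.symm)
        have g1 := hcomp c1 (hRW hc1R) z hzW (fun h => hz1 h.symm)
        have g2 := hcomp c2 (hRW hc2R) z hzW (fun h => hz0 (h.symm.trans h02.symm))
        have g3 := hcomp c3 (hRW hc3R) z hzW (fun h => hz1 (h.symm.trans h13.symm))
        rcases g0 with g0 | g0 <;> rcases g1 with g1 | g1 <;>
          rcases g2 with g2 | g2 <;> rcases g3 with g3 | g3 <;>
          first
            | exact triIn g0 g1 g2 g3
            | exact triOut g0 g1 g2 g3
            | exact hnt _ _ _ g0 a01 g1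
            | exact hnt _ _ _ g1 a12 g2
            | exact hnt _ _ _ g2 a23 g3
            | exact hnt _ _ _ g3 a30 g0
      · -- R is two-classed, apply bipartite lemma
        push_neg at hz
        set P : Set V := {u | u ∈ R ∧ cl u = cl c0} with hP
        set Q : Set V := {u | u ∈ R ∧ cl u = cl c1} with hQ
        have hcover : ∀ u ∈ R, u ∈ P ∨ u ∈ Q := by
          intro u hu
          by_cases h : cl u = cl c0
          · exact Or.inl ⟨hu, h⟩
          · exact Or.inr ⟨hu, hz u hu h⟩
        set ArcR : V → V → Prop := fun u w => Arc u w ∧ u ∈ R ∧ w ∈ R with hArcR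
        have harcLL : ∀ u w, ArcR u w → (u ∈ P ∧ w ∈ Q) ∨ (u ∈ Q ∧ w ∈ P) := by
          intro u w ⟨hw, huR, hwR⟩
          have hne2 := (harc _ _ hw).2
          rcases hcover u huR with hu | hu <;> rcases hcover w hwR with hw2 | hw2
          · exact absurd (hu.2.trans hw2.2.symm) hne2
          · exact Or.inl ⟨hu, hw2⟩
          · exact Or.inr ⟨hu, hw2⟩
          · exact absurd (hu.2.trans hw2.2.symm) hne2
        have hdisjLL : Disjoint P Q := by
          rw [Set.disjoint_left]
          rintro u ⟨-, hu2⟩ ⟨-, hu3⟩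
          exact hc01 (hu2 ▸ hu3 ▸ rfl)
        have hcompLL : ∀ u ∈ P, ∀ w ∈ Q, ArcR u w ∨ ArcR w u := by
          rintro u ⟨huR, hu2⟩ w ⟨hwR, hw2⟩
          rcases hcomp u (hRW huR) w (hRW hwR) (by rw [hu2, hw2]; exact hc01) with h | h
          · exact Or.inl ⟨h, huR, hwR⟩
          · exact Or.inr ⟨h, hwR, huR⟩
        have hexclLL : ∀ u w, ArcR u w → ArcR w u → False :=
          fun u w hA hB => hexcl u w hA.1 hB.1
        have hdegLL : ∀ u ∈ P ∪ Q, 2 * (k + 1) ≤ ({w | ArcR u w}).ncard + 1 := by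
          intro u hu
          have huR : u ∈ R := by rcases hu with h | h; exacts [h.1, h.1]
          have hEq : {w | ArcR u w} = {w | Arc u w} := by
            ext w
            exact ⟨fun h => h.1, fun h => ⟨h, huR, hRclosed u huR w h⟩⟩
          rw [hEq]
          exact hdeg u (hRW huR)
        have hneLL : k + 1 ≠ 0 → (P ∪ Q).Nonempty :=
          fun _ => ⟨c0, Or.inl ⟨hc0R, rfl⟩⟩
        obtain ⟨t, ht1, ht2⟩ := LL (k + 1) ArcR P Q harcLL hdisjLL hcompLL hexclLL hdegLL hneLL
        have hPne2 : ∀ u ∈ P, ∀ w ∈ Q, u ≠ w := by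
          rintro u ⟨-, hu⟩ w ⟨-, hw⟩ rfl
          exact hc01 (hu ▸ hw ▸ rfl)
        refine ⟨fun j => ⟨4, cy4 (t j).1 (t j).2.1 (t j).2.2.1 (t j).2.2.2⟩, ?_, ?_⟩
        · intro j
          obtain ⟨m1, m2, m3, m4, b1, b2, b3, b4, d1, d2⟩ := ht1 j
          refine ⟨Or.inr rfl, ?_, ?_, ?_⟩
          · exact cy4_inj _ _ _ _ (hPne2 _ m1 _ m2) d1 (hPne2 _ m1 _ m4)
              (hPne2 _ m3 _ m2).symm d2 (hPne2 _ m3 _ m4)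
          · exact cy4_arc Arc _ _ _ _ b1.1 b2.1 b3.1 b4.1
          · rw [cy4_range]
            rintro u (rfl | rfl | rfl | rfl)
            exacts [hRW m1.1, hRW m2.1, hRW m3.1, hRW m4.1]
        · intro j j' hjj'
          have := ht2 j j' hjj'
          simpa [cy4_range] using this
end Stmt9P

namespace Stmt9P
variable {V : Type*} [Fintype V] [DecidableEq V]

lemma parts5 (S1 S2 S3 S4 S5 T : Set V) (hsub : S1 ∪ S2 ∪ S3 ∪ S4 ∪ S5 ⊆ T)
    (d12 : Disjoint S1 S2) (d13 : Disjoint S1 S3) (d14 : Disjoint S1 S4) (d15 : Disjoint S1 S5)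
    (d23 : Disjoint S2 S3) (d24 : Disjoint S2 S4) (d25 : Disjoint S2 S5)
    (d34 : Disjoint S3 S4) (d35 : Disjoint S3 S5) (d45 : Disjoint S4 S5) :
    S1.ncard + S2.ncard + S3.ncard + S4.ncard + S5.ncard ≤ T.ncard := by
  have e1 : (S1 ∪ S2).ncard = S1.ncard + S2.ncard :=
    Set.ncard_union_eq d12 (Set.toFinite _) (Set.toFinite _)
  have e2 : (S1 ∪ S2 ∪ S3).ncard = (S1 ∪ S2).ncard + S3.ncard :=
    Set.ncard_union_eq (Set.disjoint_union_left.mpr ⟨d13, d23⟩) (Set.toFinite _) (Set.toFinite _)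
  have e3 : (S1 ∪ S2 ∪ S3 ∪ S4).ncard = (S1 ∪ S2 ∪ S3).ncard + S4.ncard :=
    Set.ncard_union_eq (Set.disjoint_union_left.mpr
      ⟨Set.disjoint_union_left.mpr ⟨d14, d24⟩, d34⟩) (Set.toFinite _) (Set.toFinite _)
  have e4 : (S1 ∪ S2 ∪ S3 ∪ S4 ∪ S5).ncard = (S1 ∪ S2 ∪ S3 ∪ S4).ncard + S5.ncard :=
    Set.ncard_union_eq (Set.disjoint_union_left.mpr
      ⟨Set.disjoint_union_left.mpr ⟨Set.disjoint_union_left.mpr ⟨d15, d25⟩, d35⟩, d45⟩)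
      (Set.toFinite _) (Set.toFinite _)
  have e5 := Set.ncard_le_ncard hsub (Set.toFinite T)
  omega

lemma two_part (S : Set V) (p : V → Prop) :
    {u | u ∈ S ∧ p u}.ncard + {u | u ∈ S ∧ ¬ p u}.ncard = S.ncard := by
  classical
  have hu : {u | u ∈ S ∧ p u} ∪ {u | u ∈ S ∧ ¬ p u} = S := by
    ext u
    constructor
    · rintro (h | h) <;> exact h.1
    · intro h
      by_cases hp : p u
      · exact Or.inl ⟨h, hp⟩
      · exact Or.inr ⟨h, hp⟩
  have hd : Disjoint {u | u ∈ S ∧ p u} {u | u ∈ S ∧ ¬ p u} := by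
    rw [Set.disjoint_left]
    rintro u ⟨-, h1⟩ ⟨-, h2⟩
    exact h2 h1
  rw [← Set.ncard_union_eq hd (Set.toFinite _) (Set.toFinite _), hu]

end Stmt9P

namespace Stmt9P
variable {n : ℕ}

lemma impure_push (col : Fin n → Fin n → ℕ)
    (hsymm : ∀ u w, col u w = col w u) (v : Fin n)
    (nc3 : ∀ p q : Fin n, p ≠ v → q ≠ v → p ≠ q → col v p ≠ col v q →
      col p q = col v p ∨ col p q = col v q)
    (nc4 : ∀ p w q : Fin n, p ≠ v → w ≠ v → q ≠ v → p ≠ w → p ≠ q → w ≠ q →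
      col v p ≠ col v q → col p w = col v p ∨ col p w = col w q ∨ col w q = col v q)
    (s t : ℕ) (hst : s ≠ t)
    (x x' y : Fin n) (hx : x ≠ v) (hcx : col v x = s) (hx' : x' ≠ v) (hcx' : col v x' = s)
    (hxx' : x' ≠ x) (hcc : col x x' ≠ s)
    (hy : y ≠ v) (hcy : col v y = t) : col x y = t := by
  have hx'y : x' ≠ y := fun h => hst (by rw [← hcx', h, hcy])
  have hxy : x ≠ y := fun h => hst (by rw [← hcx, h, hcy])
  have h1 := nc4 x' x y hx' hx hy hxx' hx'y hxy (by rw [hcx', hcy]; exact hst)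
  have h2 := nc3 x y hx hy hxy (by rw [hcx, hcy]; exact hst)
  rw [hcx', hcy] at h1
  rw [hcx, hcy] at h2
  have hs2 : col x' x ≠ s := by rw [hsymm x' x]; exact hcc
  rcases h1 with h | h | h
  · exact absurd h hs2
  · rcases h2 with h2 | h2
    · rw [h2] at h
      exact absurd h hs2
    · exact h2
  · exact h

end Stmt9P

namespace Stmt9P
variable {n : ℕ}

lemma main3 (k : ℕ) (col : Fin n → Fin n → ℕ)
    (hsymm : ∀ u w, col u w = col w u)
    (hmon : ∀ w e, monDeg col w e + 2 * k ≤ n)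
    (v : Fin n)
    (nc3 : ∀ p q : Fin n, p ≠ v → q ≠ v → p ≠ q → col v p ≠ col v q →
      col p q = col v p ∨ col p q = col v q)
    (nc4 : ∀ p w q : Fin n, p ≠ v → w ≠ v → q ≠ v → p ≠ w → p ≠ q → w ≠ q →
      col v p ≠ col v q → col p w = col v p ∨ col p w = col w q ∨ col w q = col v q)
    (a b c : ℕ) (hab : a ≠ b) (hac : a ≠ c) (hbc : b ≠ c)
    (hcov : ∀ u, u ≠ v → col v u = a ∨ col v u = b ∨ col v u = c)
    (hBne : ∃ u, u ≠ v ∧ col v u = b)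
    (hpureB : ∀ y y', y ≠ v → y' ≠ v → col v y = b → col v y' = b → y ≠ y' → col y y' = b)
    (hpureC : ∀ z z', z ≠ v → z' ≠ v → col v z = c → col v z' = c → z ≠ z' → col z z' = c) :
    HasKDisjointShortPCCycles col k := by
  classical
  set A : Set (Fin n) := {u | u ≠ v ∧ col v u = a} with hA
  set B : Set (Fin n) := {u | u ≠ v ∧ col v u = b} with hB
  set C : Set (Fin n) := {u | u ≠ v ∧ col v u = c} with hC
  have hABd : ∀ u, u ∈ A → u ∈ B → False := fun u h1 h2 => hab (h1.2.symm.trans h2.2)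
  have hACd : ∀ u, u ∈ A → u ∈ C → False := fun u h1 h2 => hac (h1.2.symm.trans h2.2)
  have hBCd : ∀ u, u ∈ B → u ∈ C → False := fun u h1 h2 => hbc (h1.2.symm.trans h2.2)
  have hvA : v ∉ A := fun h => h.1 rfl
  have hvB : v ∉ B := fun h => h.1 rfl
  have hvC : v ∉ C := fun h => h.1 rfl
  have hneAB : ∀ x ∈ A, ∀ y ∈ B, x ≠ y := fun x hx y hy h => hABd x hx (h ▸ hy)
  have hneAC : ∀ x ∈ A, ∀ z ∈ C, x ≠ z := fun x hx z hz h => hACd x hx (h ▸ hz)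
  have hneBC : ∀ y ∈ B, ∀ z ∈ C, y ≠ z := fun y hy z hz h => hBCd y hy (h ▸ hz)
  have hAB : ∀ x ∈ A, ∀ y ∈ B, col x y = a ∨ col x y = b := by
    intro x hx y hy
    have h := nc3 x y hx.1 hy.1 (hneAB x hx y hy) (by rw [hx.2, hy.2]; exact hab)
    rwa [hx.2, hy.2] at h
  have hAC : ∀ x ∈ A, ∀ z ∈ C, col x z = a ∨ col x z = c := by
    intro x hx z hz
    have h := nc3 x z hx.1 hz.1 (hneAC x hx z hz) (by rw [hx.2, hz.2]; exact hac)
    rwa [hx.2, hz.2] at h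
  have hBC : ∀ y ∈ B, ∀ z ∈ C, col y z = b ∨ col y z = c := by
    intro y hy z hz
    have h := nc3 y z hy.1 hz.1 (hneBC y hy z hz) (by rw [hy.2, hz.2]; exact hbc)
    rwa [hy.2, hz.2] at h
  set A1 : Set (Fin n) := {x | x ∈ A ∧ ∃ x', x' ∈ A ∧ x' ≠ x ∧ col x x' ≠ a} with hA1
  set A2 : Set (Fin n) := A \ A1 with hA2
  have hA2A : A2 ⊆ A := Set.diff_subset
  have hA1A : A1 ⊆ A := fun x hx => hx.1
  have hA2a : ∀ x ∈ A2, ∀ u ∈ A, u ≠ x → col x u = a := by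
    intro x hx u hu hne
    by_contra hcc
    exact hx.2 ⟨hx.1, u, hu, hne, hcc⟩
  have hA1B : ∀ x ∈ A1, ∀ y ∈ B, col x y = b := by
    rintro x ⟨hxA, x', hx'A, hx'x, hcc⟩ y hy
    exact impure_push col hsymm v nc3 nc4 a b hab x x' y hxA.1 hxA.2 hx'A.1 hx'A.2
      hx'x hcc hy.1 hy.2
  have hA1C : ∀ x ∈ A1, ∀ z ∈ C, col x z = c := by
    rintro x ⟨hxA, x', hx'A, hx'x, hcc⟩ z hz
    exact impure_push col hsymm v nc3 nc4 a c hac x x' z hxA.1 hxA.2 hx'A.1 hx'A.2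
      hx'x hcc hz.1 hz.2
  have hdAB : Disjoint A B := Set.disjoint_left.mpr (fun u h1 h2 => hABd u h1 h2)
  have hdAC : Disjoint A C := Set.disjoint_left.mpr (fun u h1 h2 => hACd u h1 h2)
  have hdBC : Disjoint B C := Set.disjoint_left.mpr (fun u h1 h2 => hBCd u h1 h2)
  have hAn : A.ncard + B.ncard + C.ncard + 1 = n := by
    have hcover : ∀ u : Fin n, u ∈ A ∪ B ∪ C ∪ {v} := by
      intro u
      by_cases h : u = v
      · exact Or.inr (by simp [h])
      · rcases hcov u h with h1 | h1 | h1
        · exact Or.inl (Or.inl (Or.inl ⟨h, h1⟩))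
        · exact Or.inl (Or.inl (Or.inr ⟨h, h1⟩))
        · exact Or.inl (Or.inr ⟨h, h1⟩)
    have huniv : A ∪ B ∪ C ∪ {v} = Set.univ := Set.eq_univ_of_forall hcover
    have hn : (Set.univ : Set (Fin n)).ncard = n := by
      rw [Set.ncard_univ]; simp
    have e1 : (A ∪ B).ncard = A.ncard + B.ncard :=
      Set.ncard_union_eq hdAB (Set.toFinite _) (Set.toFinite _)
    have e2 : (A ∪ B ∪ C).ncard = (A ∪ B).ncard + C.ncard :=
      Set.ncard_union_eq (Set.disjoint_union_left.mpr ⟨hdAC, hdBC⟩)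
        (Set.toFinite _) (Set.toFinite _)
    have e3 : (A ∪ B ∪ C ∪ {v}).ncard = (A ∪ B ∪ C).ncard + ({v} : Set (Fin n)).ncard :=
      Set.ncard_union_eq (by
        rw [Set.disjoint_union_left, Set.disjoint_union_left]
        refine ⟨⟨?_, ?_⟩, ?_⟩ <;> rw [Set.disjoint_right] <;> rintro u rfl
        exacts [hvA, hvB, hvC]) (Set.toFinite _) (Set.toFinite _)
    rw [huniv, hn] at e3
    rw [Set.ncard_singleton] at e3
    omega
  -- degree bound for vertices of A2
  have gA : ∀ x ∈ A2, 2 * k ≤ {y | y ∈ B ∧ col x y = b}.ncard +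
      {z | z ∈ C ∧ col x z = c}.ncard + 1 := by
    intro x hx
    have hxA := hA2A hx
    have hxv : x ≠ v := hxA.1
    have hsub : (A \ {x}) ∪ {v} ∪ {y | y ∈ B ∧ col x y = a} ∪ {z | z ∈ C ∧ col x z = a} ∪ ∅
        ⊆ {u | u ≠ x ∧ col x u = a} := by
      rintro u ((((⟨huA, hux⟩ | hu) | ⟨huB, hcu⟩) | ⟨huC, hcu⟩) | hu)
      · have hne : u ≠ x := by simpa using hux
        exact ⟨hne, hA2a x hx u huA hne⟩
      · have hu' : u = v := hu
        exact ⟨by rw [hu']; exact Ne.symm hxv, by rw [hu', hsymm x v]; exact hxA.2⟩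
      · exact ⟨(hneAB x hxA u huB).symm, by rw [hsymm x u] at hcu ⊢; exact hcu⟩
      · exact ⟨(hneAC x hxA u huC).symm, by rw [hsymm x u] at hcu ⊢; exact hcu⟩
      · exact absurd hu (Set.notMem_empty u)
    have hle := parts5 _ _ _ _ _ _ hsub
      (by rw [Set.disjoint_right]; rintro u rfl h; exact hvA h.1)
      (by rw [Set.disjoint_left]; rintro u h1 h2; exact hABd u h1.1 h2.1)
      (by rw [Set.disjoint_left]; rintro u h1 h2; exact hACd u h1.1 h2.1)
      (by simp)
      (by rw [Set.disjoint_left]; rintro u rfl h2; exact hvB h2.1)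
      (by rw [Set.disjoint_left]; rintro u rfl h2; exact hvC h2.1)
      (by simp)
      (by rw [Set.disjoint_left]; rintro u h1 h2; exact hBCd u h1.1 h2.1)
      (by simp)
      (by simp)
    have hmd : monDeg col x a = {u | u ≠ x ∧ col x u = a}.ncard := rfl
    have hmx := hmon x a
    have hdx : (A \ {x}).ncard + 1 = A.ncard :=
      Set.ncard_diff_singleton_add_one hxA (Set.toFinite _)
    have hpB : {y | y ∈ B ∧ col x y = a}.ncard + {y | y ∈ B ∧ col x y = b}.ncard
        = B.ncard := by
      have h2 := two_part B (fun y => col x y = a)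
      have he : {y | y ∈ B ∧ ¬ col x y = a} = {y | y ∈ B ∧ col x y = b} := by
        ext y
        constructor
        · rintro ⟨h1, h2⟩
          rcases hAB x hxA y h1 with h | h
          · exact absurd h h2
          · exact ⟨h1, h⟩
        · rintro ⟨h1, h2⟩
          exact ⟨h1, by rw [h2]; exact hab.symm⟩
      rw [he] at h2
      exact h2
    have hpC : {z | z ∈ C ∧ col x z = a}.ncard + {z | z ∈ C ∧ col x z = c}.ncard
        = C.ncard := by
      have h2 := two_part C (fun z => col x z = a)
      have he : {z | z ∈ C ∧ ¬ col x z = a} = {z | z ∈ C ∧ col x z = c} := by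
        ext z
        constructor
        · rintro ⟨h1, h2⟩
          rcases hAC x hxA z h1 with h | h
          · exact absurd h h2
          · exact ⟨h1, h⟩
        · rintro ⟨h1, h2⟩
          exact ⟨h1, by rw [h2]; exact hac.symm⟩
      rw [he] at h2
      exact h2
    rw [Set.ncard_singleton, Set.ncard_empty] at hle
    omega
  -- degree bound for vertices of B
  have hA12 : A1.ncard + A2.ncard = A.ncard := by
    have e := Set.ncard_diff hA1A (Set.toFinite _)
    have le := Set.ncard_le_ncard hA1A (Set.toFinite _)
    rw [← hA2] at e
    omega
  have gB : ∀ y ∈ B, 2 * k ≤ {x | x ∈ A2 ∧ col y x = a}.ncard +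
      {z | z ∈ C ∧ col y z = c}.ncard + 1 := by
    intro y hy
    have hyv : y ≠ v := hy.1
    have hsub : (B \ {y}) ∪ {v} ∪ A1 ∪ {x | x ∈ A2 ∧ col y x = b} ∪ {z | z ∈ C ∧ col y z = b}
        ⊆ {u | u ≠ y ∧ col y u = b} := by
      rintro u ((((⟨huB, huy⟩ | hu) | hu) | ⟨huA2, hcu⟩) | ⟨huC, hcu⟩)
      · have hne : u ≠ y := by simpa using huy
        exact ⟨hne, hpureB y u hyv huB.1 hy.2 huB.2 (Ne.symm hne)⟩
      · have hu' : u = v := hu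
        exact ⟨by rw [hu']; exact Ne.symm hyv, by rw [hu', hsymm y v]; exact hy.2⟩
      · refine ⟨(hneAB u (hA1A hu) y hy), ?_⟩
        rw [hsymm y u]
        exact hA1B u hu y hy
      · exact ⟨(hneAB u (hA2A huA2) y hy), hcu⟩
      · exact ⟨(hneBC y hy u huC).symm, hcu⟩
    have hle := parts5 _ _ _ _ _ _ hsub
      (by rw [Set.disjoint_right]; rintro u rfl h; exact hvB h.1)
      (by rw [Set.disjoint_left]; rintro u h1 h2; exact hABd u (hA1A h2) h1.1)
      (by rw [Set.disjoint_left]; rintro u h1 h2; exact hABd u (hA2A h2.1) h1.1)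
      (by rw [Set.disjoint_left]; rintro u h1 h2; exact hBCd u h1.1 h2.1)
      (by rw [Set.disjoint_left]; rintro u rfl h2; exact hvA (hA1A h2))
      (by rw [Set.disjoint_left]; rintro u rfl h2; exact hvA (hA2A h2.1))
      (by rw [Set.disjoint_left]; rintro u rfl h2; exact hvC h2.1)
      (by rw [Set.disjoint_left]; rintro u h1 h2; exact h2.1.2 h1)
      (by rw [Set.disjoint_left]; rintro u h1 h2; exact hACd u (hA1A h1) h2.1)
      (by rw [Set.disjoint_left]; rintro u h1 h2; exact hACd u (hA2A h1.1) h2.1)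
    have hmd : monDeg col y b = {u | u ≠ y ∧ col y u = b}.ncard := rfl
    have hmy := hmon y b
    have hdy : (B \ {y}).ncard + 1 = B.ncard :=
      Set.ncard_diff_singleton_add_one hy (Set.toFinite _)
    have hpA2 : {x | x ∈ A2 ∧ col y x = a}.ncard + {x | x ∈ A2 ∧ col y x = b}.ncard
        = A2.ncard := by
      have h2 := two_part A2 (fun x => col y x = a)
      have he : {x | x ∈ A2 ∧ ¬ col y x = a} = {x | x ∈ A2 ∧ col y x = b} := by
        ext x
        constructor
        · rintro ⟨h1, h2⟩
          rcases hAB x (hA2A h1) y hy with h | h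
          · exact absurd (by rw [hsymm y x]; exact h) h2
          · exact ⟨h1, by rw [hsymm y x]; exact h⟩
        · rintro ⟨h1, h2⟩
          exact ⟨h1, by rw [h2]; exact hab.symm⟩
      rw [he] at h2
      exact h2
    have hpC : {z | z ∈ C ∧ col y z = c}.ncard + {z | z ∈ C ∧ col y z = b}.ncard
        = C.ncard := by
      have h2 := two_part C (fun z => col y z = b)
      have he : {z | z ∈ C ∧ ¬ col y z = b} = {z | z ∈ C ∧ col y z = c} := by
        ext z
        constructor
        · rintro ⟨h1, h2⟩
          rcases hBC y hy z h1 with h | h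
          · exact absurd h h2
          · exact ⟨h1, h⟩
        · rintro ⟨h1, h2⟩
          exact ⟨h1, by rw [h2]; exact hbc.symm⟩
      rw [he] at h2
      omega
    rw [Set.ncard_singleton] at hle
    omega
  -- degree bound for vertices of C
  have gC : ∀ z ∈ C, 2 * k ≤ {x | x ∈ A2 ∧ col z x = a}.ncard +
      {y | y ∈ B ∧ col z y = b}.ncard + 1 := by
    intro z hz
    have hzv : z ≠ v := hz.1
    have hsub : (C \ {z}) ∪ {v} ∪ A1 ∪ {x | x ∈ A2 ∧ col z x = c} ∪ {y | y ∈ B ∧ col z y = c}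
        ⊆ {u | u ≠ z ∧ col z u = c} := by
      rintro u ((((⟨huC, huz⟩ | hu) | hu) | ⟨huA2, hcu⟩) | ⟨huB, hcu⟩)
      · have hne : u ≠ z := by simpa using huz
        exact ⟨hne, hpureC z u hzv huC.1 hz.2 huC.2 (Ne.symm hne)⟩
      · have hu' : u = v := hu
        exact ⟨by rw [hu']; exact Ne.symm hzv, by rw [hu', hsymm z v]; exact hz.2⟩
      · refine ⟨(hneAC u (hA1A hu) z hz), ?_⟩
        rw [hsymm z u]
        exact hA1C u hu z hz
      · exact ⟨(hneAC u (hA2A huA2) z hz), hcu⟩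
      · exact ⟨(hneBC u huB z hz), hcu⟩
    have hle := parts5 _ _ _ _ _ _ hsub
      (by rw [Set.disjoint_right]; rintro u rfl h; exact hvC h.1)
      (by rw [Set.disjoint_left]; rintro u h1 h2; exact hACd u (hA1A h2) h1.1)
      (by rw [Set.disjoint_left]; rintro u h1 h2; exact hACd u (hA2A h2.1) h1.1)
      (by rw [Set.disjoint_left]; rintro u h1 h2; exact hBCd u h2.1 h1.1)
      (by rw [Set.disjoint_left]; rintro u rfl h2; exact hvA (hA1A h2))
      (by rw [Set.disjoint_left]; rintro u rfl h2; exact hvA (hA2A h2.1))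
      (by rw [Set.disjoint_left]; rintro u rfl h2; exact hvB h2.1)
      (by rw [Set.disjoint_left]; rintro u h1 h2; exact h2.1.2 h1)
      (by rw [Set.disjoint_left]; rintro u h1 h2; exact hABd u (hA1A h1) h2.1)
      (by rw [Set.disjoint_left]; rintro u h1 h2; exact hABd u (hA2A h1.1) h2.1)
    have hmd : monDeg col z c = {u | u ≠ z ∧ col z u = c}.ncard := rfl
    have hmz := hmon z c
    have hdz : (C \ {z}).ncard + 1 = C.ncard :=
      Set.ncard_diff_singleton_add_one hz (Set.toFinite _)
    have hpA2 : {x | x ∈ A2 ∧ col z x = a}.ncard + {x | x ∈ A2 ∧ col z x = c}.ncard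
        = A2.ncard := by
      have h2 := two_part A2 (fun x => col z x = a)
      have he : {x | x ∈ A2 ∧ ¬ col z x = a} = {x | x ∈ A2 ∧ col z x = c} := by
        ext x
        constructor
        · rintro ⟨h1, h2⟩
          rcases hAC x (hA2A h1) z hz with h | h
          · exact absurd (by rw [hsymm z x]; exact h) h2
          · exact ⟨h1, by rw [hsymm z x]; exact h⟩
        · rintro ⟨h1, h2⟩
          exact ⟨h1, by rw [h2]; exact hac.symm⟩
      rw [he] at h2
      exact h2
    have hpB : {y | y ∈ B ∧ col z y = b}.ncard + {y | y ∈ B ∧ col z y = c}.ncard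
        = B.ncard := by
      have h2 := two_part B (fun y => col z y = b)
      have he : {y | y ∈ B ∧ ¬ col z y = b} = {y | y ∈ B ∧ col z y = c} := by
        ext y
        constructor
        · rintro ⟨h1, h2⟩
          rcases hBC y h1 z hz with h | h
          · exact absurd (by rw [hsymm z y]; exact h) h2
          · exact ⟨h1, by rw [hsymm z y]; exact h⟩
        · rintro ⟨h1, h2⟩
          exact ⟨h1, by rw [h2]; exact hbc.symm⟩
      rw [he] at h2
      exact h2
    rw [Set.ncard_singleton] at hle
    omega
  -- build the multipartite tournament
  set W2 : Set (Fin n) := A2 ∪ B ∪ C with hW2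
  set cld : Fin n → Fin 3 := fun u => if u ∈ A2 then 0 else if u ∈ B then 1 else 2 with hcld
  set kap : Fin n → ℕ := fun u => if u ∈ A2 then a else if u ∈ B then b else c with hkap
  set Arc : Fin n → Fin n → Prop := fun u w =>
    (u ∈ A2 ∧ w ∈ B ∧ col u w = b) ∨ (u ∈ A2 ∧ w ∈ C ∧ col u w = c) ∨
    (u ∈ B ∧ w ∈ A2 ∧ col u w = a) ∨ (u ∈ B ∧ w ∈ C ∧ col u w = c) ∨
    (u ∈ C ∧ w ∈ A2 ∧ col u w = a) ∨ (u ∈ C ∧ w ∈ B ∧ col u w = b) with hArcD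
  have hclA : ∀ u ∈ A2, cld u = 0 := fun u hu => if_pos hu
  have hclB : ∀ u ∈ B, cld u = 1 := by
    intro u hu
    have h1 : u ∉ A2 := fun h => hABd u (hA2A h) hu
    simp only [hcld, if_neg h1, if_pos hu]
  have hclC : ∀ u ∈ C, cld u = 2 := by
    intro u hu
    have h1 : u ∉ A2 := fun h => hACd u (hA2A h) hu
    have h2 : u ∉ B := fun h => hBCd u h hu
    simp only [hcld, if_neg h1, if_neg h2]
  have hkA : ∀ u ∈ A2, kap u = a := fun u hu => if_pos hu
  have hkB : ∀ u ∈ B, kap u = b := by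
    intro u hu
    have h1 : u ∉ A2 := fun h => hABd u (hA2A h) hu
    simp only [hkap, if_neg h1, if_pos hu]
  have hkC : ∀ u ∈ C, kap u = c := by
    intro u hu
    have h1 : u ∉ A2 := fun h => hACd u (hA2A h) hu
    have h2 : u ∉ B := fun h => hBCd u h hu
    simp only [hkap, if_neg h1, if_neg h2]
  have hmemA : ∀ u ∈ A2, u ∈ W2 := fun u hu => Or.inl (Or.inl hu)
  have hmemB : ∀ u ∈ B, u ∈ W2 := fun u hu => Or.inl (Or.inr hu)
  have hmemC : ∀ u ∈ C, u ∈ W2 := fun u hu => Or.inr hu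
  have harc : ∀ u w, Arc u w → (u ∈ W2 ∧ w ∈ W2) ∧ cld u ≠ cld w := by
    intro u w h
    rcases h with ⟨h1,h2,_⟩|⟨h1,h2,_⟩|⟨h1,h2,_⟩|⟨h1,h2,_⟩|⟨h1,h2,_⟩|⟨h1,h2,_⟩
    · exact ⟨⟨hmemA u h1, hmemB w h2⟩, by rw [hclA u h1, hclB w h2]; decide⟩
    · exact ⟨⟨hmemA u h1, hmemC w h2⟩, by rw [hclA u h1, hclC w h2]; decide⟩
    · exact ⟨⟨hmemB u h1, hmemA w h2⟩, by rw [hclB u h1, hclA w h2]; decide⟩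
    · exact ⟨⟨hmemB u h1, hmemC w h2⟩, by rw [hclB u h1, hclC w h2]; decide⟩
    · exact ⟨⟨hmemC u h1, hmemA w h2⟩, by rw [hclC u h1, hclA w h2]; decide⟩
    · exact ⟨⟨hmemC u h1, hmemB w h2⟩, by rw [hclC u h1, hclB w h2]; decide⟩
  have harcval : ∀ u w, Arc u w → col u w = kap w := by
    intro u w h
    rcases h with ⟨h1,h2,h3⟩|⟨h1,h2,h3⟩|⟨h1,h2,h3⟩|⟨h1,h2,h3⟩|⟨h1,h2,h3⟩|⟨h1,h2,h3⟩
    · rw [hkB w h2]; exact h3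
    · rw [hkC w h2]; exact h3
    · rw [hkA w h2]; exact h3
    · rw [hkC w h2]; exact h3
    · rw [hkA w h2]; exact h3
    · rw [hkB w h2]; exact h3
  have hkne : ∀ u w, u ∈ W2 → w ∈ W2 → cld u ≠ cld w → kap u ≠ kap w := by
    intro u w hu hw hne
    rcases hu with (hu|hu)|hu <;> rcases hw with (hw|hw)|hw
    · exact absurd (by rw [hclA u hu, hclA w hw]) hne
    · rw [hkA u hu, hkB w hw]; exact hab
    · rw [hkA u hu, hkC w hw]; exact hac
    · rw [hkB u hu, hkA w hw]; exact hab.symm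
    · exact absurd (by rw [hclB u hu, hclB w hw]) hne
    · rw [hkB u hu, hkC w hw]; exact hbc
    · rw [hkC u hu, hkA w hw]; exact hac.symm
    · rw [hkC u hu, hkB w hw]; exact hbc.symm
    · exact absurd (by rw [hclC u hu, hclC w hw]) hne
  have hexcl : ∀ u w, Arc u w → Arc w u → False := by
    intro u w h1 h2
    have e1 := harcval u w h1
    have e2 := harcval w u h2
    have hm := harc u w h1
    apply hkne u w hm.1.1 hm.1.2 hm.2
    rw [← e2, ← e1, hsymm w u]
  have mk1 : ∀ u w, u ∈ A2 → w ∈ B → col u w = b → Arc u w :=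
    fun u w h1 h2 h3 => Or.inl ⟨h1, h2, h3⟩
  have mk2 : ∀ u w, u ∈ A2 → w ∈ C → col u w = c → Arc u w :=
    fun u w h1 h2 h3 => Or.inr (Or.inl ⟨h1, h2, h3⟩)
  have mk3 : ∀ u w, u ∈ B → w ∈ A2 → col u w = a → Arc u w :=
    fun u w h1 h2 h3 => Or.inr (Or.inr (Or.inl ⟨h1, h2, h3⟩))
  have mk4 : ∀ u w, u ∈ B → w ∈ C → col u w = c → Arc u w :=
    fun u w h1 h2 h3 => Or.inr (Or.inr (Or.inr (Or.inl ⟨h1, h2, h3⟩)))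
  have mk5 : ∀ u w, u ∈ C → w ∈ A2 → col u w = a → Arc u w :=
    fun u w h1 h2 h3 => Or.inr (Or.inr (Or.inr (Or.inr (Or.inl ⟨h1, h2, h3⟩))))
  have mk6 : ∀ u w, u ∈ C → w ∈ B → col u w = b → Arc u w :=
    fun u w h1 h2 h3 => Or.inr (Or.inr (Or.inr (Or.inr (Or.inr ⟨h1, h2, h3⟩))))
  have hcomp : ∀ u ∈ W2, ∀ w ∈ W2, cld u ≠ cld w → Arc u w ∨ Arc w u := by
    intro u hu w hw hne
    rcases hu with (hu|hu)|hu <;> rcases hw with (hw|hw)|hw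
    · exact absurd (by rw [hclA u hu, hclA w hw]) hne
    · rcases hAB u (hA2A hu) w hw with h | h
      · exact Or.inr (mk3 w u hw hu (by rw [hsymm w u]; exact h))
      · exact Or.inl (mk1 u w hu hw h)
    · rcases hAC u (hA2A hu) w hw with h | h
      · exact Or.inr (mk5 w u hw hu (by rw [hsymm w u]; exact h))
      · exact Or.inl (mk2 u w hu hw h)
    · rcases hAB w (hA2A hw) u hu with h | h
      · exact Or.inl (mk3 u w hu hw (by rw [hsymm u w]; exact h))
      · exact Or.inr (mk1 w u hw hu h)
    · exact absurd (by rw [hclB u hu, hclB w hw]) hne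
    · rcases hBC u hu w hw with h | h
      · exact Or.inr (mk6 w u hw hu (by rw [hsymm w u]; exact h))
      · exact Or.inl (mk4 u w hu hw h)
    · rcases hAC w (hA2A hw) u hu with h | h
      · exact Or.inl (mk5 u w hu hw (by rw [hsymm u w]; exact h))
      · exact Or.inr (mk2 w u hw hu h)
    · rcases hBC w hw u hu with h | h
      · exact Or.inl (mk6 u w hu hw (by rw [hsymm u w]; exact h))
      · exact Or.inr (mk4 w u hw hu h)
    · exact absurd (by rw [hclC u hu, hclC w hw]) hne
  have hdeg : ∀ u ∈ W2, 2 * k ≤ ({w | Arc u w}).ncard + 1 := by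
    intro u hu
    rcases hu with (hu|hu)|hu
    · have heq : {w | Arc u w} = {y | y ∈ B ∧ col u y = b} ∪ {z | z ∈ C ∧ col u z = c} := by
        ext w
        constructor
        · rintro (⟨h1,h2,h3⟩|⟨h1,h2,h3⟩|⟨h1,h2,h3⟩|⟨h1,h2,h3⟩|⟨h1,h2,h3⟩|⟨h1,h2,h3⟩)
          · exact Or.inl ⟨h2, h3⟩
          · exact Or.inr ⟨h2, h3⟩
          · exact absurd h1 (fun h => hABd u (hA2A hu) h)
          · exact absurd h1 (fun h => hABd u (hA2A hu) h)
          · exact absurd h1 (fun h => hACd u (hA2A hu) h)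
          · exact absurd h1 (fun h => hACd u (hA2A hu) h)
        · rintro (⟨h1, h2⟩ | ⟨h1, h2⟩)
          · exact mk1 u w hu h1 h2
          · exact mk2 u w hu h1 h2
      rw [heq, Set.ncard_union_eq (by
        rw [Set.disjoint_left]; rintro w h1 h2; exact hBCd w h1.1 h2.1)
        (Set.toFinite _) (Set.toFinite _)]
      exact gA u hu
    · have heq : {w | Arc u w} = {x | x ∈ A2 ∧ col u x = a} ∪ {z | z ∈ C ∧ col u z = c} := by
        ext w
        constructor
        · rintro (⟨h1,h2,h3⟩|⟨h1,h2,h3⟩|⟨h1,h2,h3⟩|⟨h1,h2,h3⟩|⟨h1,h2,h3⟩|⟨h1,h2,h3⟩)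
          · exact absurd hu (fun h => hABd u (hA2A h1) h)
          · exact absurd hu (fun h => hABd u (hA2A h1) h)
          · exact Or.inl ⟨h2, h3⟩
          · exact Or.inr ⟨h2, h3⟩
          · exact absurd h1 (fun h => hBCd u hu h)
          · exact absurd h1 (fun h => hBCd u hu h)
        · rintro (⟨h1, h2⟩ | ⟨h1, h2⟩)
          · exact mk3 u w hu h1 h2
          · exact mk4 u w hu h1 h2
      rw [heq, Set.ncard_union_eq (by
        rw [Set.disjoint_left]; rintro w h1 h2; exact hACd w (hA2A h1.1) h2.1)
        (Set.toFinite _) (Set.toFinite _)]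
      exact gB u hu
    · have heq : {w | Arc u w} = {x | x ∈ A2 ∧ col u x = a} ∪ {y | y ∈ B ∧ col u y = b} := by
        ext w
        constructor
        · rintro (⟨h1,h2,h3⟩|⟨h1,h2,h3⟩|⟨h1,h2,h3⟩|⟨h1,h2,h3⟩|⟨h1,h2,h3⟩|⟨h1,h2,h3⟩)
          · exact absurd hu (fun h => hACd u (hA2A h1) h)
          · exact absurd hu (fun h => hACd u (hA2A h1) h)
          · exact absurd hu (fun h => hBCd u h1 h)
          · exact absurd hu (fun h => hBCd u h1 h)
          · exact Or.inl ⟨h2, h3⟩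
          · exact Or.inr ⟨h2, h3⟩
        · rintro (⟨h1, h2⟩ | ⟨h1, h2⟩)
          · exact mk5 u w hu h1 h2
          · exact mk6 u w hu h1 h2
      rw [heq, Set.ncard_union_eq (by
        rw [Set.disjoint_left]; rintro w h1 h2; exact hABd w (hA2A h1.1) h2.1)
        (Set.toFinite _) (Set.toFinite _)]
      exact gC u hu
  have hne2 : k ≠ 0 → W2.Nonempty := by
    intro _
    obtain ⟨u1, hu1, hcu1⟩ := hBne
    exact ⟨u1, hmemB u1 ⟨hu1, hcu1⟩⟩
  obtain ⟨F, hF1, hF2⟩ := lemT k Arc W2 cld harc hcomp hexcl hdeg hne2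
  refine ⟨fun j => (F j).1, fun j => (F j).2, ?_, hF2⟩
  intro j
  obtain ⟨hm, hinj, harcs, hrange⟩ := hF1 j
  refine ⟨⟨?_, hinj, ?_⟩, ?_⟩
  · show 3 ≤ (F j).1
    rcases hm with h | h <;> omega
  · intro i
    have a1 := harcs i
    have a2 := harcs (i + 1)
    have e12 : i + 1 + 1 = i + 2 := by rw [add_assoc]; norm_num
    rw [e12] at a2
    have e1 := harcval _ _ a1
    have e2 := harcval _ _ a2
    have hm2 := harc _ _ a2
    have hne3 := hkne _ _ hm2.1.1 hm2.1.2 hm2.2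
    rw [e1, e2]
    exact hne3
  · show (F j).1 ≤ 4
    rcases hm with h | h <;> omega

end Stmt9P

/-- If Δ^mon(G) ≤ n − 2k, then either G has k disjoint short PC cycles, or
every vertex of color degree at most 3 lies on a PC cycle of length 3 or 4. -/
theorem stmt9 (n k : ℕ) (col : Fin n → Fin n → ℕ)
    (hsymm : ∀ u v, col u v = col v u)
    (hmon : ∀ v a, monDeg col v a + 2 * k ≤ n) :
    HasKDisjointShortPCCycles col k ∨
      ∀ v : Fin n, colorDeg col v ≤ 3 →
        ∃ (m : ℕ) (c : ZMod m → Fin n),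
          IsPCCycle col m c ∧ m ≤ 4 ∧ v ∈ Set.range c := by
  classical
  by_cases hk : k = 0
  · left
    subst hk
    exact ⟨fun j => j.elim0, fun j => j.elim0, fun j => j.elim0, fun j _ _ => j.elim0⟩
  by_cases hleft : HasKDisjointShortPCCycles col k
  · exact Or.inl hleft
  right
  intro v hv
  by_contra hno
  apply hleft
  have nc3 : ∀ p q : Fin n, p ≠ v → q ≠ v → p ≠ q → col v p ≠ col v q →
      col p q = col v p ∨ col p q = col v q := by
    intro p q hp hq hpq hcc
    by_contra hc2
    push_neg at hc2
    apply hno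
    refine ⟨3, Stmt9P.cy3 v p q, ⟨le_refl 3, ?_, ?_⟩, by norm_num, 0, by simp +decide [Stmt9P.cy3]⟩
    · exact Stmt9P.cy3_inj v p q (Ne.symm hp) hpq (Ne.symm hq)
    · apply Stmt9P.cy3_spec
      · exact fun h => hc2.1 h.symm
      · intro h; apply hc2.2; rw [h, hsymm q v]
      · intro h; apply hcc; rw [← h, hsymm q v]
  have nc4 : ∀ p w q : Fin n, p ≠ v → w ≠ v → q ≠ v → p ≠ w → p ≠ q → w ≠ q →
      col v p ≠ col v q → col p w = col v p ∨ col p w = col w q ∨ col w q = col v q := by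
    intro p w q hp hw hq hpw hpq hwq hcc
    by_contra hc2
    push_neg at hc2
    apply hno
    refine ⟨4, Stmt9P.cy4 v p w q, ⟨by norm_num, ?_, ?_⟩, by norm_num, 0, by simp +decide [Stmt9P.cy4]⟩
    · exact Stmt9P.cy4_inj v p w q (Ne.symm hp) (Ne.symm hw) (Ne.symm hq) hpw hpq hwq
    · apply Stmt9P.cy4_spec
      · exact fun h => hc2.1 h.symm
      · exact hc2.2.1
      · intro h; apply hc2.2.2; rw [h, hsymm q v]
      · intro h; apply hcc; rw [← h, hsymm q v]
  set Imp : ℕ → Prop := fun t => ∃ x x' : Fin n,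
    x ≠ v ∧ col v x = t ∧ x' ≠ v ∧ col v x' = t ∧ x' ≠ x ∧ col x x' ≠ t with hImp
  have himp2 : ∀ s t, s ≠ t → Imp s → Imp t → False := by
    rintro s t hst ⟨x, x', hx, hcx, hx', hcx', hxx', hccx⟩ ⟨y, y', hy, hcy, hy', hcy', hyy', hccy⟩
    have e1 : col x y = t :=
      Stmt9P.impure_push col hsymm v nc3 nc4 s t hst x x' y hx hcx hx' hcx' hxx' hccx hy hcy
    have e2 : col y x = s :=
      Stmt9P.impure_push col hsymm v nc3 nc4 t s (Ne.symm hst) y y' x hy hcy hy' hcy' hyy' hccy hx hcx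
    apply hst
    rw [← e2, hsymm y x, e1]
  have hpure : ∀ t, ¬ Imp t → ∀ y y', y ≠ v → y' ≠ v → col v y = t → col v y' = t →
      y ≠ y' → col y y' = t := by
    intro t hni y y' h1 h2 h3 h4 h5
    by_contra hcc
    exact hni ⟨y, y', h1, h3, h2, h4, Ne.symm h5, hcc⟩
  have hnpos : 0 < n := Fin.pos v
  have h2k : 2 * k ≤ n := by
    have := hmon v 0
    omega
  have hn2 : 2 ≤ n := by omega
  obtain ⟨u0, hu0⟩ : ∃ u0 : Fin n, u0 ≠ v := by
    by_cases h : v = ⟨0, by omega⟩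
    · refine ⟨⟨1, by omega⟩, ?_⟩
      rw [h]
      intro hh
      have := congrArg Fin.val hh
      simp at this
    · exact ⟨⟨0, by omega⟩, fun hh => h (hh ▸ rfl)⟩
  set a : ℕ := col v u0 with ha
  by_cases h1 : ∃ u, u ≠ v ∧ col v u ≠ a
  · obtain ⟨u1, hu1, hcu1⟩ := h1
    set b : ℕ := col v u1 with hb
    have hab : a ≠ b := fun h => hcu1 h.symm
    by_cases h2 : ∃ u, u ≠ v ∧ col v u ≠ a ∧ col v u ≠ b
    · -- three colors at v
      obtain ⟨u2, hu2, hcu2a, hcu2b⟩ := h2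
      set c : ℕ := col v u2 with hc
      have hac : a ≠ c := fun h => hcu2a h.symm
      have hbc : b ≠ c := fun h => hcu2b h.symm
      have hcov : ∀ u, u ≠ v → col v u = a ∨ col v u = b ∨ col v u = c := by
        intro u hu
        by_contra hcc
        push_neg at hcc
        have hsub : ({a, b, c, col v u} : Set ℕ) ⊆ col v '' {u | u ≠ v} := by
          intro t ht
          simp only [Set.mem_insert_iff, Set.mem_singleton_iff] at ht
          rcases ht with rfl | rfl | rfl | rfl
          exacts [⟨u0, hu0, ha.symm⟩, ⟨u1, hu1, hb.symm⟩, ⟨u2, hu2, hc.symm⟩, ⟨u, hu, rfl⟩]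
        have hcard : ({a, b, c, col v u} : Set ℕ).ncard = 4 := by
          rw [Set.ncard_insert_of_notMem (by
            simp only [Set.mem_insert_iff, Set.mem_singleton_iff]
            push_neg
            exact ⟨hab, hac, fun h => hcc.1 h.symm⟩)]
          rw [Set.ncard_insert_of_notMem (by
            simp only [Set.mem_insert_iff, Set.mem_singleton_iff]
            push_neg
            exact ⟨hbc, fun h => hcc.2.1 h.symm⟩)]
          rw [Set.ncard_insert_of_notMem (by
            simp only [Set.mem_singleton_iff]
            exact fun h => hcc.2.2 h.symm)]
          rw [Set.ncard_singleton]
        have hle := Set.ncard_le_ncard hsub (Set.toFinite _)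
        have hcd : colorDeg col v = (col v '' {u | u ≠ v}).ncard := rfl
        omega
      by_cases hiB : Imp b
      · have hpa : ¬ Imp a := fun h => himp2 a b hab h hiB
        have hpc : ¬ Imp c := fun h => himp2 c b hbc.symm h hiB
        refine Stmt9P.main3 k col hsymm hmon v nc3 nc4 b a c (Ne.symm hab) hbc hac ?_
          ⟨u0, hu0, ha.symm⟩ (hpure a hpa) (hpure c hpc)
        intro u hu
        rcases hcov u hu with h | h | h
        exacts [Or.inr (Or.inl h), Or.inl h, Or.inr (Or.inr h)]
      · by_cases hiC : Imp c
        · have hpa : ¬ Imp a := fun h => himp2 a c hac h hiC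
          refine Stmt9P.main3 k col hsymm hmon v nc3 nc4 c a b (Ne.symm hac) (Ne.symm hbc) hab ?_
            ⟨u0, hu0, ha.symm⟩ (hpure a hpa) (hpure b hiB)
          intro u hu
          rcases hcov u hu with h | h | h
          exacts [Or.inr (Or.inl h), Or.inr (Or.inr h), Or.inl h]
        · exact Stmt9P.main3 k col hsymm hmon v nc3 nc4 a b c hab hac hbc hcov
            ⟨u1, hu1, hb.symm⟩ (hpure b hiB) (hpure c hiC)
    · -- exactly two colors at v
      push_neg at h2
      set c : ℕ := a + b + 1 with hc
      have hac : a ≠ c := by omega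
      have hbc : b ≠ c := by omega
      have hcov : ∀ u, u ≠ v → col v u = a ∨ col v u = b ∨ col v u = c := by
        intro u hu
        by_cases h : col v u = a
        · exact Or.inl h
        · exact Or.inr (Or.inl (h2 u hu h))
      have hCpure : ∀ y y', y ≠ v → y' ≠ v → col v y = c → col v y' = c → y ≠ y' →
          col y y' = c := by
        intro y y' hy _ h3 _ _
        exfalso
        by_cases h : col v y = a
        · omega
        · have := h2 y hy h
          omega
      by_cases hiB : Imp b
      · have hpa : ¬ Imp a := fun h => himp2 a b hab h hiB
        refine Stmt9P.main3 k col hsymm hmon v nc3 nc4 b a c (Ne.symm hab) hbc hac ?_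
          ⟨u0, hu0, ha.symm⟩ (hpure a hpa) hCpure
        intro u hu
        rcases hcov u hu with h | h | h
        exacts [Or.inr (Or.inl h), Or.inl h, Or.inr (Or.inr h)]
      · exact Stmt9P.main3 k col hsymm hmon v nc3 nc4 a b c hab hac hbc hcov
          ⟨u1, hu1, hb.symm⟩ (hpure b hiB) hCpure
  · -- only one color at v : contradiction with the degree condition
    push_neg at h1
    exfalso
    have he : {u | u ≠ v ∧ col v u = a} = {u : Fin n | u ≠ v} := by
      ext u
      exact ⟨fun h => h.1, fun h => ⟨h, h1 u h⟩⟩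
    have he2 : {u : Fin n | u ≠ v} = Set.univ \ {v} := by
      ext u; simp
    have hmd : monDeg col v a = n - 1 := by
      have : monDeg col v a = {u | u ≠ v ∧ col v u = a}.ncard := rfl
      rw [this, he, he2, Set.ncard_diff_singleton_of_mem (Set.mem_univ v)]
      rw [Set.ncard_univ]
      simp
    have := hmon v a
    omega
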